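/- arXiv:1911.05565 — 3 statements merged into one kernel-verified Lean document; each statement's English description precedes it below -/
import Mathlib

section
/- A permutation avoids both patterns 2413 and 3142 if and only if it is separable, i.e., it can be obtained from the singleton permutation by iterated direct sums and skew sums. -/
open Equiv Finset Filter Topology

/-- Direct sum of permutations: `(σ⊕τ)(i)=σ(i)` for `i<k`, `(σ⊕τ)(k+i)=k+τ(i)`. -/
def directSum {k l : ℕ} (σ : Equiv.Perm (Fin k)) (τ : Equiv.Perm (Fin l)) :
    Equiv.Perm (Fin (k + l)) :=
  finSumFinEquiv.symm.trans ((Equiv.sumCongr σ τ).trans finSumFinEquiv)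

/-- Skew sum of permutations: `(σ⊖τ)(i)=σ(i)+l` for `i<k`, `(σ⊖τ)(k+i)=τ(i)`. -/
def skewSum {k l : ℕ} (σ : Equiv.Perm (Fin k)) (τ : Equiv.Perm (Fin l)) :
    Equiv.Perm (Fin (k + l)) :=
  finSumFinEquiv.symm.trans ((Equiv.sumCongr σ τ).trans
    ((Equiv.sumComm (Fin k) (Fin l)).trans (finSumFinEquiv.trans (finCongr (Nat.add_comm l k)))))

/-- A permutation is separable if it is the singleton or a direct or skew sum of
two separable permutations. -/
inductive Separable : {n : ℕ} → Equiv.Perm (Fin n) → Prop where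
  | single : Separable (Equiv.refl (Fin 1))
  | dsum {k l : ℕ} {σ : Equiv.Perm (Fin k)} {τ : Equiv.Perm (Fin l)} :
      Separable σ → Separable τ → Separable (directSum σ τ)
  | ssum {k l : ℕ} {σ : Equiv.Perm (Fin k)} {τ : Equiv.Perm (Fin l)} :
      Separable σ → Separable τ → Separable (skewSum σ τ)

/-- `numSep n` = number of separable permutations of `[n]` (denoted `s_n`). -/
noncomputable def numSep (n : ℕ) : ℕ := Nat.card {σ : Equiv.Perm (Fin n) // Separable σ}

/-- `σ` contains the pattern `π` if some subsequence of `σ` is order-isomorphic to `π`. -/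
def ContainsPattern {n m : ℕ} (σ : Equiv.Perm (Fin n)) (π : Equiv.Perm (Fin m)) : Prop :=
  ∃ f : Fin m → Fin n, StrictMono f ∧ ∀ i j : Fin m, π i < π j ↔ σ (f i) < σ (f j)

def AvoidsPattern {n m : ℕ} (σ : Equiv.Perm (Fin n)) (π : Equiv.Perm (Fin m)) : Prop :=
  ¬ ContainsPattern σ π

/-- The pattern 2413 (zero-based one-line notation 1,3,0,2). -/
def perm2413 : Equiv.Perm (Fin 4) := ⟨![1, 3, 0, 2], ![2, 0, 3, 1], by decide, by decide⟩

/-- The pattern 3142 (zero-based one-line notation 2,0,3,1). -/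
def perm3142 : Equiv.Perm (Fin 4) := ⟨![2, 0, 3, 1], ![1, 3, 0, 2], by decide, by decide⟩


lemma directSum_castAdd {k l : ℕ} (σ : Perm (Fin k)) (τ : Perm (Fin l)) (x : Fin k) :
    directSum σ τ (Fin.castAdd l x) = Fin.castAdd l (σ x) := by
  simp [directSum]

lemma directSum_natAdd {k l : ℕ} (σ : Perm (Fin k)) (τ : Perm (Fin l)) (x : Fin l) :
    directSum σ τ (Fin.natAdd k x) = Fin.natAdd k (τ x) := by
  simp [directSum]

lemma skewSum_castAdd {k l : ℕ} (σ : Perm (Fin k)) (τ : Perm (Fin l)) (x : Fin k) :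
    (skewSum σ τ (Fin.castAdd l x)).val = l + (σ x).val := by
  simp [skewSum, Nat.add_comm]

lemma skewSum_natAdd {k l : ℕ} (σ : Perm (Fin k)) (τ : Perm (Fin l)) (x : Fin l) :
    (skewSum σ τ (Fin.natAdd k x)).val = (τ x).val := by
  simp [skewSum]

lemma directSum_lt {k l : ℕ} (σ : Perm (Fin k)) (τ : Perm (Fin l)) (x : Fin (k + l)) :
    (directSum σ τ x).val < k ↔ x.val < k := by
  induction x using Fin.addCases with
  | left x => simp [directSum_castAdd, Fin.is_lt]
  | right x => simp [directSum_natAdd]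

lemma skewSum_ge {k l : ℕ} (σ : Perm (Fin k)) (τ : Perm (Fin l)) (x : Fin (k + l)) :
    l ≤ (skewSum σ τ x).val ↔ x.val < k := by
  induction x using Fin.addCases with
  | left x => simp [skewSum_castAdd, Fin.is_lt]
  | right x =>
    have h1 : (skewSum σ τ (Fin.natAdd k x)).val = (τ x).val := skewSum_natAdd σ τ x
    have h2 := (τ x).is_lt
    have h3 : (Fin.natAdd k x).val = k + x.val := rfl
    omega

lemma containsPattern_of_map {n m r : ℕ} {σ : Perm (Fin n)} {τ : Perm (Fin m)}
    {π : Perm (Fin r)} (g : Fin m → Fin n) (hg : StrictMono g)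
    (hval : ∀ i j, τ i < τ j ↔ σ (g i) < σ (g j)) :
    ContainsPattern τ π → ContainsPattern σ π := by
  rintro ⟨f, hf, hc⟩
  exact ⟨g ∘ f, hg.comp hf, fun i j => (hc i j).trans (hval _ _)⟩

lemma exists_low_map {k l m : ℕ} (f : Fin m → Fin (k + l)) (hlow : ∀ i, (f i).val < k) :
    ∃ g : Fin m → Fin k, ∀ i, f i = Fin.castAdd l (g i) :=
  ⟨fun i => ⟨(f i).val, hlow i⟩, fun i => rfl⟩

lemma exists_high_map {k l m : ℕ} (f : Fin m → Fin (k + l)) (hhigh : ∀ i, k ≤ (f i).val) :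
    ∃ g : Fin m → Fin l, ∀ i, f i = Fin.natAdd k (g i) :=
  ⟨fun i => ⟨(f i).val - k, by have := (f i).is_lt; have := hhigh i; omega⟩,
   fun i => Fin.ext (by have := hhigh i; simp only [Fin.coe_natAdd]; omega)⟩

lemma contains_dsum_low {k l m : ℕ} {σ : Perm (Fin k)} {τ : Perm (Fin l)} {π : Perm (Fin m)}
    (f : Fin m → Fin (k + l)) (hf : StrictMono f)
    (hc : ∀ i j, π i < π j ↔ directSum σ τ (f i) < directSum σ τ (f j))
    (hlow : ∀ i, (f i).val < k) : ContainsPattern σ π := by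
  obtain ⟨g, hg⟩ := exists_low_map f hlow
  have e : ∀ i, (g i).val = (f i).val := fun i => by rw [hg i]; rfl
  refine ⟨g, fun i j hij => Fin.lt_def.2 (by rw [e i, e j]; exact Fin.lt_def.1 (hf hij)),
    fun i j => (hc i j).trans ?_⟩
  rw [hg i, hg j, directSum_castAdd, directSum_castAdd]
  simp only [Fin.lt_def, Fin.coe_castAdd]

lemma contains_dsum_high {k l m : ℕ} {σ : Perm (Fin k)} {τ : Perm (Fin l)} {π : Perm (Fin m)}
    (f : Fin m → Fin (k + l)) (hf : StrictMono f)
    (hc : ∀ i j, π i < π j ↔ directSum σ τ (f i) < directSum σ τ (f j))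
    (hhigh : ∀ i, k ≤ (f i).val) : ContainsPattern τ π := by
  obtain ⟨g, hg⟩ := exists_high_map f hhigh
  have e : ∀ i, k + (g i).val = (f i).val := fun i => by rw [hg i]; rfl
  refine ⟨g, fun i j hij => Fin.lt_def.2 (by
      have h := Fin.lt_def.1 (hf hij); have := e i; have := e j; omega),
    fun i j => (hc i j).trans ?_⟩
  rw [hg i, hg j, directSum_natAdd, directSum_natAdd]
  simp only [Fin.lt_def, Fin.coe_natAdd]
  omega

lemma contains_ssum_low {k l m : ℕ} {σ : Perm (Fin k)} {τ : Perm (Fin l)} {π : Perm (Fin m)}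
    (f : Fin m → Fin (k + l)) (hf : StrictMono f)
    (hc : ∀ i j, π i < π j ↔ skewSum σ τ (f i) < skewSum σ τ (f j))
    (hlow : ∀ i, (f i).val < k) : ContainsPattern σ π := by
  obtain ⟨g, hg⟩ := exists_low_map f hlow
  have e : ∀ i, (g i).val = (f i).val := fun i => by rw [hg i]; rfl
  refine ⟨g, fun i j hij => Fin.lt_def.2 (by rw [e i, e j]; exact Fin.lt_def.1 (hf hij)),
    fun i j => (hc i j).trans ?_⟩
  rw [hg i, hg j]
  rw [Fin.lt_def, Fin.lt_def, skewSum_castAdd, skewSum_castAdd]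
  omega

lemma contains_ssum_high {k l m : ℕ} {σ : Perm (Fin k)} {τ : Perm (Fin l)} {π : Perm (Fin m)}
    (f : Fin m → Fin (k + l)) (hf : StrictMono f)
    (hc : ∀ i j, π i < π j ↔ skewSum σ τ (f i) < skewSum σ τ (f j))
    (hhigh : ∀ i, k ≤ (f i).val) : ContainsPattern τ π := by
  obtain ⟨g, hg⟩ := exists_high_map f hhigh
  have e : ∀ i, k + (g i).val = (f i).val := fun i => by rw [hg i]; rfl
  refine ⟨g, fun i j hij => Fin.lt_def.2 (by
      have h := Fin.lt_def.1 (hf hij); have := e i; have := e j; omega),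
    fun i j => (hc i j).trans ?_⟩
  rw [hg i, hg j]
  rw [Fin.lt_def, Fin.lt_def, skewSum_natAdd, skewSum_natAdd]

lemma avoidsPattern_directSum {k l : ℕ} {σ : Perm (Fin k)} {τ : Perm (Fin l)}
    {π : Perm (Fin 4)}
    (hcut : ∀ c : Fin 3, ∃ a b : Fin 4, a.val ≤ c.val ∧ c.val < b.val ∧ ¬ π a < π b)
    (h1 : AvoidsPattern σ π) (h2 : AvoidsPattern τ π) :
    AvoidsPattern (directSum σ τ) π := by
  rintro ⟨f, hf, hc⟩
  -- if position of f a is low and f b is high, then π a < π b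
  have key : ∀ a b : Fin 4, (f a).val < k → k ≤ (f b).val → π a < π b := by
    intro a b ha hb
    refine (hc a b).2 (Fin.lt_def.2 ?_)
    have h1 := (directSum_lt σ τ (f a)).2 ha
    have h2 := (directSum_lt σ τ (f b)).not.2 (by omega)
    omega
  have mono : ∀ a b : Fin 4, a ≤ b → (f b).val < k → (f a).val < k := by
    intro a b hab hb
    rcases eq_or_lt_of_le hab with h | h
    · rwa [h]
    · exact lt_trans (Fin.lt_def.1 (hf h)) hb
  have cutcase : ∀ c : ℕ, (hc : c < 3) → (∀ a : Fin 4, a.val ≤ c → (f a).val < k) →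
      (∀ b : Fin 4, c < b.val → k ≤ (f b).val) → False := by
    intro c hc hlo hhi
    obtain ⟨a, b, hac, hcb, hab⟩ := hcut ⟨c, hc⟩
    exact hab (key a b (hlo a hac) (hhi b hcb))
  by_cases h0 : (f 0).val < k <;> by_cases h3 : (f 3).val < k
  · exact h1 (contains_dsum_low f hf hc (by
      intro i; fin_cases i
      · exact h0
      · exact mono 1 3 (by decide) h3
      · exact mono 2 3 (by decide) h3
      · exact h3))
  · by_cases h1' : (f 1).val < k <;> by_cases h2' : (f 2).val < k
    · exact cutcase 2 (by omega) (fun a ha => mono a ⟨2, by omega⟩ (Fin.le_def.2 ha) h2')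
        (fun b hb => le_of_not_gt (fun hfb => h3 (mono ⟨3, by omega⟩ b (Fin.le_def.2 (show (3:ℕ) ≤ b.val by omega)) hfb)))
    · exact cutcase 1 (by omega) (fun a ha => mono a ⟨1, by omega⟩ (Fin.le_def.2 ha) h1')
        (fun b hb => le_of_not_gt (fun hfb => h2' (mono ⟨2, by omega⟩ b (Fin.le_def.2 (show (2:ℕ) ≤ b.val by omega)) hfb)))
    · exact absurd (mono 1 2 (by decide) h2') h1'
    · exact cutcase 0 (by omega) (fun a ha => mono a ⟨0, by omega⟩ (Fin.le_def.2 ha) h0)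
        (fun b hb => le_of_not_gt (fun hfb => h1' (mono ⟨1, by omega⟩ b (Fin.le_def.2 (show (1:ℕ) ≤ b.val by omega)) hfb)))
  · exact absurd (mono 0 3 (by decide) h3) h0
  · exact h2 (contains_dsum_high f hf hc (by
      intro i; fin_cases i
      · exact le_of_not_gt h0
      · exact le_of_not_gt (fun h => h0 (mono 0 1 (by decide) h))
      · exact le_of_not_gt (fun h => h0 (mono 0 2 (by decide) h))
      · exact le_of_not_gt h3))

lemma avoidsPattern_skewSum {k l : ℕ} {σ : Perm (Fin k)} {τ : Perm (Fin l)}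
    {π : Perm (Fin 4)}
    (hcut : ∀ c : Fin 3, ∃ a b : Fin 4, a.val ≤ c.val ∧ c.val < b.val ∧ ¬ π b < π a)
    (h1 : AvoidsPattern σ π) (h2 : AvoidsPattern τ π) :
    AvoidsPattern (skewSum σ τ) π := by
  rintro ⟨f, hf, hc⟩
  have key : ∀ a b : Fin 4, (f a).val < k → k ≤ (f b).val → π b < π a := by
    intro a b ha hb
    refine (hc b a).2 (Fin.lt_def.2 ?_)
    have h1 := (skewSum_ge σ τ (f a)).2 ha
    have h2 := (skewSum_ge σ τ (f b)).not.2 (by omega)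
    have := (skewSum σ τ (f b)).is_lt
    omega
  have mono : ∀ a b : Fin 4, a ≤ b → (f b).val < k → (f a).val < k := by
    intro a b hab hb
    rcases eq_or_lt_of_le hab with h | h
    · rwa [h]
    · exact lt_trans (Fin.lt_def.1 (hf h)) hb
  have cutcase : ∀ c : ℕ, (hc : c < 3) → (∀ a : Fin 4, a.val ≤ c → (f a).val < k) →
      (∀ b : Fin 4, c < b.val → k ≤ (f b).val) → False := by
    intro c hc hlo hhi
    obtain ⟨a, b, hac, hcb, hab⟩ := hcut ⟨c, hc⟩
    exact hab (key a b (hlo a hac) (hhi b hcb))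
  by_cases h0 : (f 0).val < k <;> by_cases h3 : (f 3).val < k
  · exact h1 (contains_ssum_low f hf hc (by
      intro i; fin_cases i
      · exact h0
      · exact mono 1 3 (by decide) h3
      · exact mono 2 3 (by decide) h3
      · exact h3))
  · by_cases h1' : (f 1).val < k <;> by_cases h2' : (f 2).val < k
    · exact cutcase 2 (by omega) (fun a ha => mono a ⟨2, by omega⟩ (Fin.le_def.2 ha) h2')
        (fun b hb => le_of_not_gt (fun hfb => h3 (mono ⟨3, by omega⟩ b (Fin.le_def.2 (show (3:ℕ) ≤ b.val by omega)) hfb)))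
    · exact cutcase 1 (by omega) (fun a ha => mono a ⟨1, by omega⟩ (Fin.le_def.2 ha) h1')
        (fun b hb => le_of_not_gt (fun hfb => h2' (mono ⟨2, by omega⟩ b (Fin.le_def.2 (show (2:ℕ) ≤ b.val by omega)) hfb)))
    · exact absurd (mono 1 2 (by decide) h2') h1'
    · exact cutcase 0 (by omega) (fun a ha => mono a ⟨0, by omega⟩ (Fin.le_def.2 ha) h0)
        (fun b hb => le_of_not_gt (fun hfb => h1' (mono ⟨1, by omega⟩ b (Fin.le_def.2 (show (1:ℕ) ≤ b.val by omega)) hfb)))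
  · exact absurd (mono 0 3 (by decide) h3) h0
  · exact h2 (contains_ssum_high f hf hc (by
      intro i; fin_cases i
      · exact le_of_not_gt h0
      · exact le_of_not_gt (fun h => h0 (mono 0 1 (by decide) h))
      · exact le_of_not_gt (fun h => h0 (mono 0 2 (by decide) h))
      · exact le_of_not_gt h3))

theorem separable_avoids {n : ℕ} {σ : Perm (Fin n)} (h : Separable σ) :
    AvoidsPattern σ perm2413 ∧ AvoidsPattern σ perm3142 := by
  induction h with
  | single =>
    constructor <;> rintro ⟨f, hf, -⟩ <;>
      exact absurd (Subsingleton.elim (f 0) (f 1)) (hf (show (0:Fin 4) < 1 by decide)).ne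
  | dsum hσ hτ ihσ ihτ =>
    exact ⟨avoidsPattern_directSum (by decide) ihσ.1 ihτ.1,
      avoidsPattern_directSum (by decide) ihσ.2 ihτ.2⟩
  | ssum hσ hτ ihσ ihτ =>
    exact ⟨avoidsPattern_skewSum (by decide) ihσ.1 ihτ.1,
      avoidsPattern_skewSum (by decide) ihσ.2 ihτ.2⟩

lemma strictMono_vec4 {n : ℕ} {p0 p1 p2 p3 : Fin n} (h01 : p0 < p1) (h12 : p1 < p2)
    (h23 : p2 < p3) : StrictMono ![p0, p1, p2, p3] := by
  intro a b hab
  fin_cases a <;> fin_cases b <;>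
    simp_all [Matrix.cons_val_zero, Matrix.cons_val_one, Matrix.head_cons,
      Matrix.cons_val_two, Matrix.tail_cons, Matrix.cons_val_three] <;>
    first
    | exact h01
    | exact h12
    | exact h23
    | exact h01.trans h12
    | exact h12.trans h23
    | exact (h01.trans h12).trans h23
    | exact absurd hab (by decide)

lemma contains_perm3142 {n : ℕ} (σ : Perm (Fin n)) (p0 p1 p2 p3 : Fin n)
    (h01 : p0 < p1) (h12 : p1 < p2) (h23 : p2 < p3)
    (v13 : (σ p1).val < (σ p3).val) (v30 : (σ p3).val < (σ p0).val)
    (v02 : (σ p0).val < (σ p2).val) : ContainsPattern σ perm3142 := by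
  refine ⟨![p0, p1, p2, p3], strictMono_vec4 h01 h12 h23, fun i j => ?_⟩
  fin_cases i <;> fin_cases j <;>
    simp only [perm3142, Equiv.coe_fn_mk, Matrix.cons_val_zero, Matrix.cons_val_one,
      Matrix.head_cons, Fin.mk_one, Matrix.cons_val_two, Matrix.tail_cons, Matrix.cons_val_three,
      Fin.zero_eta, Fin.isValue, Matrix.cons_val_fin_one, Fin.lt_def] <;>
    simp <;> omega

lemma contains_perm2413 {n : ℕ} (σ : Perm (Fin n)) (p0 p1 p2 p3 : Fin n)
    (h01 : p0 < p1) (h12 : p1 < p2) (h23 : p2 < p3)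
    (v20 : (σ p2).val < (σ p0).val) (v03 : (σ p0).val < (σ p3).val)
    (v31 : (σ p3).val < (σ p1).val) : ContainsPattern σ perm2413 := by
  refine ⟨![p0, p1, p2, p3], strictMono_vec4 h01 h12 h23, fun i j => ?_⟩
  fin_cases i <;> fin_cases j <;>
    simp only [perm2413, Equiv.coe_fn_mk, Matrix.cons_val_zero, Matrix.cons_val_one,
      Matrix.head_cons, Fin.mk_one, Matrix.cons_val_two, Matrix.tail_cons, Matrix.cons_val_three,
      Fin.zero_eta, Fin.isValue, Matrix.cons_val_fin_one, Fin.lt_def] <;>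
    simp <;> omega

lemma card_filter_lt_val {n k : ℕ} (hk : k ≤ n) :
    (Finset.univ.filter (fun j : Fin n => j.val < k)).card = k := by
  have : Finset.univ.filter (fun j : Fin n => j.val < k)
      = Finset.univ.image (fun x : Fin k => (⟨x.val, lt_of_lt_of_le x.is_lt hk⟩ : Fin n)) := by
    ext j
    simp only [Finset.mem_filter, Finset.mem_univ, true_and, Finset.mem_image]
    constructor
    · intro hj; exact ⟨⟨j.val, hj⟩, rfl⟩
    · rintro ⟨x, -, rfl⟩; exact x.is_lt
  have hinj : Function.Injective (fun x : Fin k => (⟨x.val, lt_of_lt_of_le x.is_lt hk⟩ : Fin n)) := by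
    intro a b hab
    simp only [Fin.mk.injEq] at hab
    exact Fin.ext hab
  rw [this, Finset.card_image_of_injective _ hinj, Finset.card_univ, Fintype.card_fin]

lemma card_filter_ge_val {n k : ℕ} (hk : k ≤ n) :
    (Finset.univ.filter (fun j : Fin n => n - k ≤ j.val)).card = k := by
  have : Finset.univ.filter (fun j : Fin n => n - k ≤ j.val)
      = Finset.univ.image (fun x : Fin k => (⟨n - k + x.val, by have := x.is_lt; omega⟩ : Fin n)) := by
    ext j
    simp only [Finset.mem_filter, Finset.mem_univ, true_and, Finset.mem_image]
    constructor
    · intro hj; exact ⟨⟨j.val - (n - k), by have := j.is_lt; omega⟩,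
        Fin.ext (by simp; omega)⟩
    · rintro ⟨x, -, rfl⟩; simp
  have hinj : Function.Injective
      (fun x : Fin k => (⟨n - k + x.val, by have := x.is_lt; omega⟩ : Fin n)) := by
    intro a b hab
    simp only [Fin.mk.injEq] at hab
    exact Fin.ext (by omega)
  rw [this, Finset.card_image_of_injective _ hinj, Finset.card_univ, Fintype.card_fin]

/-- If `σ` maps positions `< k` into values `< k`, this is an iff. -/
lemma perm_lt_iff {n k : ℕ} (σ : Perm (Fin n))
    (h : ∀ i : Fin n, i.val < k → (σ i).val < k) :
    ∀ i : Fin n, i.val < k ↔ (σ i).val < k := by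
  classical
  intro i
  refine ⟨h i, fun hi => ?_⟩
  set A : Finset (Fin n) := Finset.univ.filter (fun j => j.val < k) with hA
  have hsub : A.image σ ⊆ A := by
    intro x hx
    simp only [hA, Finset.mem_image, Finset.mem_filter, Finset.mem_univ, true_and] at hx ⊢
    obtain ⟨j, hj, rfl⟩ := hx
    exact h j hj
  have heq : A.image σ = A :=
    Finset.eq_of_subset_of_card_le hsub
      (le_of_eq (Finset.card_image_of_injective _ σ.injective).symm)
  have : σ i ∈ A := by simp [hA, hi]
  rw [← heq] at this
  obtain ⟨j, hj, hji⟩ := Finset.mem_image.1 this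
  have : j = i := σ.injective hji
  subst this
  simpa [hA] using hj

/-- If `σ` maps positions `< k` into the top `k` values, this is an iff. -/
lemma perm_ge_iff {n k : ℕ} (σ : Perm (Fin n)) (hk : k ≤ n)
    (h : ∀ i : Fin n, i.val < k → n - k ≤ (σ i).val) :
    ∀ i : Fin n, i.val < k ↔ n - k ≤ (σ i).val := by
  classical
  intro i
  refine ⟨h i, fun hi => ?_⟩
  set A : Finset (Fin n) := Finset.univ.filter (fun j => j.val < k) with hA
  set C : Finset (Fin n) := Finset.univ.filter (fun j => n - k ≤ j.val) with hC
  have hsub : A.image σ ⊆ C := by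
    intro x hx
    simp only [hA, hC, Finset.mem_image, Finset.mem_filter, Finset.mem_univ, true_and] at hx ⊢
    obtain ⟨j, hj, rfl⟩ := hx
    exact h j hj
  have heq : A.image σ = C := by
    refine Finset.eq_of_subset_of_card_le hsub ?_
    rw [Finset.card_image_of_injective _ σ.injective, hA, hC,
      card_filter_lt_val hk, card_filter_ge_val hk]
  have : σ i ∈ C := by
    rw [hC, Finset.mem_filter]
    exact ⟨Finset.mem_univ _, hi⟩
  rw [← heq] at this
  obtain ⟨j, hj, hji⟩ := Finset.mem_image.1 this
  have : j = i := σ.injective hji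
  subst this
  simpa [hA] using hj

/-- If all positions `≥ i` have values `> v`, then there are at most `n-1-v` of them. -/
lemma count_tail_gt {n : ℕ} (σ : Perm (Fin n)) (i v : Fin n)
    (h : ∀ z : Fin n, i ≤ z → v < σ z) : n - i.val ≤ n - 1 - v.val := by
  classical
  have hsub : (Finset.Ici i).image σ ⊆ Finset.Ioi v := by
    intro x hx
    obtain ⟨j, hj, rfl⟩ := Finset.mem_image.1 hx
    exact Finset.mem_Ioi.2 (h j (Finset.mem_Ici.1 hj))
  calc n - i.val = (Finset.Ici i).card := (Fin.card_Ici i).symm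
    _ = ((Finset.Ici i).image σ).card := (Finset.card_image_of_injective _ σ.injective).symm
    _ ≤ (Finset.Ioi v).card := Finset.card_le_card hsub
    _ = n - 1 - v.val := Fin.card_Ioi v

lemma count_tail_lt {n : ℕ} (σ : Perm (Fin n)) (i v : Fin n)
    (h : ∀ z : Fin n, i ≤ z → σ z < v) : n - i.val ≤ v.val := by
  classical
  have hsub : (Finset.Ici i).image σ ⊆ Finset.Iio v := by
    intro x hx
    obtain ⟨j, hj, rfl⟩ := Finset.mem_image.1 hx
    exact Finset.mem_Iio.2 (h j (Finset.mem_Ici.1 hj))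
  calc n - i.val = (Finset.Ici i).card := (Fin.card_Ici i).symm
    _ = ((Finset.Ici i).image σ).card := (Finset.card_image_of_injective _ σ.injective).symm
    _ ≤ (Finset.Iio v).card := Finset.card_le_card hsub
    _ = v.val := Fin.card_Iio v

lemma val_succAbove {m : ℕ} (v : Fin (m + 1)) (x : Fin m) :
    (v.succAbove x).val = if x.val < v.val then x.val else x.val + 1 := by
  rcases lt_or_ge (x.castSucc) v with h | h
  · rw [Fin.succAbove_of_castSucc_lt _ _ h, if_pos (by simpa [Fin.lt_def] using h)]
    rfl
  · rw [Fin.succAbove_of_le_castSucc _ _ h, if_neg (by simp [Fin.le_def] at h; omega)]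
    rfl

/-- The pattern obtained from `σ` by deleting the first entry. -/
def delFirst {m : ℕ} (σ : Perm (Fin (m + 1))) : Perm (Fin m) :=
  ((finSuccAboveEquiv (0 : Fin (m + 1))).trans
    ((σ.subtypeEquiv (fun a => not_iff_not.2
      ⟨fun e => by rw [e], fun e => σ.injective e⟩)).trans
      (finSuccAboveEquiv (σ 0)).symm))

lemma delFirst_key {m : ℕ} (σ : Perm (Fin (m + 1))) (i : Fin m) :
    σ i.succ = (σ 0).succAbove (delFirst σ i) := by
  have : delFirst σ i = (finSuccAboveEquiv (σ 0)).symm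
      ⟨σ ((0 : Fin (m+1)).succAbove i), fun e => (Fin.succAbove_ne 0 i) (σ.injective e)⟩ := rfl
  rw [this]
  have h2 := (finSuccAboveEquiv (σ 0)).apply_symm_apply
      ⟨σ ((0 : Fin (m+1)).succAbove i), fun e => (Fin.succAbove_ne 0 i) (σ.injective e)⟩
  rw [finSuccAboveEquiv_apply] at h2
  have h3 := congrArg Subtype.val h2
  simp only at h3
  rw [h3, Fin.succAbove_zero]

lemma delFirst_lt_iff {m : ℕ} (σ : Perm (Fin (m + 1))) (i j : Fin m) :
    delFirst σ i < delFirst σ j ↔ σ i.succ < σ j.succ := by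
  rw [delFirst_key, delFirst_key]
  exact (Fin.succAbove_lt_succAbove_iff).symm

lemma delFirst_avoids {m : ℕ} (σ : Perm (Fin (m + 1))) {r : ℕ} (π : Perm (Fin r)) :
    AvoidsPattern σ π → AvoidsPattern (delFirst σ) π := by
  intro h hc
  exact h (containsPattern_of_map Fin.succ (fun a b hab => Fin.succ_lt_succ_iff.2 hab)
    (fun i j => (delFirst_lt_iff σ i j)) hc)

lemma decomposable : ∀ n : ℕ, 2 ≤ n → ∀ σ : Perm (Fin n),
    AvoidsPattern σ perm2413 → AvoidsPattern σ perm3142 →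
    ∃ k : ℕ, 0 < k ∧ k < n ∧
      ((∀ i : Fin n, i.val < k ↔ (σ i).val < k) ∨
       (∀ i : Fin n, i.val < k ↔ n - k ≤ (σ i).val)) := by
  intro n
  induction n using Nat.strong_induction_on with
  | _ n ih =>
  intro hn σ h2413 h3142
  obtain ⟨m, rfl⟩ : ∃ m, n = m + 1 := ⟨n - 1, by omega⟩
  have hm1 : 1 ≤ m := by omega
  by_cases hm : m = 1
  · -- n = 2
    subst hm
    have h0lt := (σ 0).is_lt
    have h1lt := (σ 1).is_lt
    have hne : (σ 1).val ≠ (σ 0).val := fun hv =>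
      absurd (σ.injective (Fin.ext hv)) (by decide)
    rcases Nat.lt_or_ge (σ 0).val 1 with h0 | h0
    · refine ⟨1, one_pos, by omega, Or.inl (fun i => ?_)⟩
      constructor
      · intro hi
        have hi0 : i = 0 := Fin.ext (by simpa using (by omega : i.val = 0))
        subst hi0; omega
      · intro hi
        have : σ i = σ 0 := Fin.ext (by omega)
        have h := σ.injective this
        subst h; simp
    · refine ⟨1, one_pos, by omega, Or.inr (fun i => ?_)⟩
      constructor
      · intro hi
        have hi0 : i = 0 := Fin.ext (by simpa using (by omega : i.val = 0))
        subst hi0; omega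
      · intro hi
        have : σ i = σ 0 := Fin.ext (by omega)
        have h := σ.injective this
        subst h; simp
  · -- m ≥ 2
    have hm2 : 2 ≤ m := by omega
    set σ' := delFirst σ with hσ'
    have sval : ∀ j : Fin m, (σ j.succ).val =
        if (σ' j).val < (σ 0).val then (σ' j).val else (σ' j).val + 1 := by
      intro j
      rw [delFirst_key σ j, val_succAbove]
    obtain ⟨k', hk'pos, hk'lt, hcase⟩ :=
      ih m (by omega) hm2 σ' (delFirst_avoids σ _ h2413) (delFirst_avoids σ _ h3142)
    have hvlt := (σ 0).is_lt
    rcases hcase with hlow | htop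
    · -- prefix of σ' occupies the lowest k' values
      rcases le_or_gt (σ 0).val k' with hv | hv
      · -- good: prefix of length k'+1 occupies lowest k'+1 values
        refine ⟨k' + 1, by omega, by omega, Or.inl (fun i => ?_)⟩
        rcases eq_or_ne i 0 with rfl | hne
        · simp only [Fin.val_zero]; omega
        · obtain ⟨j, rfl⟩ := Fin.eq_succ_of_ne_zero hne
          have hs := sval j
          have hj := hlow j
          have hvs : (j.succ).val = j.val + 1 := Fin.val_succ j
          rcases Nat.lt_or_ge (σ' j).val (σ 0).val with h | h
          · rw [if_pos h] at hs; omega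
          · rw [if_neg (by omega)] at hs; omega
      · -- bad: first entry is large; use avoidance of 3142
        -- position of value 0
        have hx0 : σ (σ.symm 0) = 0 := σ.apply_symm_apply 0
        have hx0ne : σ.symm 0 ≠ 0 := by
          intro e
          rw [e] at hx0
          have := congrArg Fin.val hx0
          simp only [Fin.val_zero] at this
          omega
        obtain ⟨jx, hjx⟩ := Fin.eq_succ_of_ne_zero hx0ne
        have hjxval : (σ jx.succ).val = 0 := by
          rw [← hjx, hx0]; rfl
        have hσ'jx : (σ' jx).val = 0 := by
          have hs := sval jx
          rcases Nat.lt_or_ge (σ' jx).val (σ 0).val with h | h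
          · rw [if_pos h] at hs; omega
          · rw [if_neg (by omega)] at hs; omega
        have hjxlt : jx.val < k' := (hlow jx).2 (by omega)
        have hx0val : (σ.symm 0).val = jx.val + 1 := by rw [hjx]; exact Fin.val_succ jx
        have claim : ∀ y z : Fin (m + 1), y < z → k' < y.val →
            (σ 0).val < (σ y).val → (σ z).val < (σ 0).val → False := by
          intro y z hyz hky hvy hzv
          apply h3142
          have hxy : σ.symm 0 < y := Fin.lt_def.2 (by omega)
          have h0x : (0 : Fin (m + 1)) < σ.symm 0 := Fin.lt_def.2 (by simp only [Fin.val_zero]; omega)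
          have hzx : (σ z).val ≠ 0 := by
            intro e
            have : σ z = σ (σ.symm 0) := by rw [hx0]; exact Fin.ext (by simpa using e)
            have := congrArg Fin.val (σ.injective this)
            have hyv := Fin.lt_def.1 hyz
            omega
          refine contains_perm3142 σ 0 (σ.symm 0) y z h0x hxy hyz ?_ ?_ ?_
          · rw [hx0]; simp only [Fin.val_zero]; omega
          · exact hzv
          · exact hvy
        have hfin : ∀ i : Fin (m + 1), i.val ≤ (σ 0).val → (σ i).val ≤ (σ 0).val := by
          intro i hi
          by_contra hbig
          push_neg at hbig
          have hki : k' < i.val := by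
            by_contra hle
            push_neg at hle
            rcases eq_or_ne i 0 with rfl | hne
            · omega
            · obtain ⟨j, rfl⟩ := Fin.eq_succ_of_ne_zero hne
              have hs := sval j
              have hvs : (j.succ).val = j.val + 1 := Fin.val_succ j
              have hj : (σ' j).val < k' := (hlow j).1 (by omega)
              rcases Nat.lt_or_ge (σ' j).val (σ 0).val with h | h
              · rw [if_pos h] at hs; omega
              · rw [if_neg (by omega)] at hs; omega
          have htail : ∀ z : Fin (m + 1), i ≤ z → σ 0 < σ z := by
            intro z hz
            rcases eq_or_lt_of_le hz with rfl | hlt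
            · exact Fin.lt_def.2 hbig
            · by_contra hnot
              have hz0 : z ≠ 0 := by
                intro e
                have := Fin.lt_def.1 hlt
                rw [e] at this
                simp at this
              have hzne : σ z ≠ σ 0 := fun e => hz0 (σ.injective e)
              have : (σ z).val < (σ 0).val := by
                rcases Nat.lt_or_ge (σ z).val (σ 0).val with h | h
                · exact h
                · exact absurd (Fin.lt_def.2 (by
                    have : (σ z).val ≠ (σ 0).val := fun e => hzne (Fin.ext e)
                    omega)) hnot
              exact claim i z hlt hki hbig this
          have hcount := count_tail_gt σ i (σ 0) htail
          omega
        rcases Nat.lt_or_ge (σ 0).val m with hvm | hvm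
        · refine ⟨(σ 0).val + 1, by omega, by omega, Or.inl (perm_lt_iff σ ?_)⟩
          intro i hi
          have := hfin i (by omega)
          omega
        · -- σ 0 is the maximum value
          have hveq : (σ 0).val = m := by omega
          refine ⟨1, one_pos, by omega, Or.inr (fun i => ?_)⟩
          constructor
          · intro hi
            have hi0 : i = 0 := Fin.ext (by simpa using (by omega : i.val = 0))
            subst hi0
            omega
          · intro hi
            have hsi := (σ i).is_lt
            have : σ i = σ 0 := Fin.ext (by omega)
            have h := σ.injective this
            subst h
            simp
    · -- prefix of σ' occupies the highest k' values
      rcases le_or_gt (m - k') (σ 0).val with hv | hv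
      · refine ⟨k' + 1, by omega, by omega, Or.inr (fun i => ?_)⟩
        rcases eq_or_ne i 0 with rfl | hne
        · simp only [Fin.val_zero]; omega
        · obtain ⟨j, rfl⟩ := Fin.eq_succ_of_ne_zero hne
          have hs := sval j
          have hj := htop j
          have hσ'lt := (σ' j).is_lt
          have hvs : (j.succ).val = j.val + 1 := Fin.val_succ j
          rcases Nat.lt_or_ge (σ' j).val (σ 0).val with h | h
          · rw [if_pos h] at hs; omega
          · rw [if_neg (by omega)] at hs; omega
      · -- bad: first entry is small; use avoidance of 2413
        have hxm : σ (σ.symm (Fin.last m)) = Fin.last m := σ.apply_symm_apply _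
        have hlastval : (Fin.last m).val = m := rfl
        have hxmne : σ.symm (Fin.last m) ≠ 0 := by
          intro e
          rw [e] at hxm
          have := congrArg Fin.val hxm
          omega
        obtain ⟨jm, hjm⟩ := Fin.eq_succ_of_ne_zero hxmne
        have hjmval : (σ jm.succ).val = m := by rw [← hjm, hxm]; rfl
        have hσ'jm : (σ' jm).val = m - 1 := by
          have hs := sval jm
          have hσ'lt := (σ' jm).is_lt
          rcases Nat.lt_or_ge (σ' jm).val (σ 0).val with h | h
          · rw [if_pos h] at hs; omega
          · rw [if_neg (by omega)] at hs; omega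
        have hjmlt : jm.val < k' := (htop jm).2 (by omega)
        have hxmval : (σ.symm (Fin.last m)).val = jm.val + 1 := by
          rw [hjm]; exact Fin.val_succ jm
        have claim : ∀ y z : Fin (m + 1), y < z → k' < y.val →
            (σ y).val < (σ 0).val → (σ 0).val < (σ z).val → False := by
          intro y z hyz hky hyv hvz
          apply h2413
          have hxy : σ.symm (Fin.last m) < y := Fin.lt_def.2 (by omega)
          have h0x : (0 : Fin (m + 1)) < σ.symm (Fin.last m) := Fin.lt_def.2 (by simp only [Fin.val_zero]; omega)
          have hzx : (σ z).val ≠ m := by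
            intro e
            have : σ z = σ (σ.symm (Fin.last m)) := by
              rw [hxm]; exact Fin.ext (by simpa using e)
            have := congrArg Fin.val (σ.injective this)
            have hyv' := Fin.lt_def.1 hyz
            omega
          refine contains_perm2413 σ 0 (σ.symm (Fin.last m)) y z h0x hxy hyz ?_ ?_ ?_
          · exact hyv
          · have := (σ z).is_lt; omega
          · rw [hxm]; have := (σ z).is_lt; simp [Fin.lt_def]; omega
        have hfin : ∀ i : Fin (m + 1), i.val < (m + 1) - (σ 0).val →
            (σ 0).val ≤ (σ i).val := by
          intro i hi
          by_contra hsmall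
          push_neg at hsmall
          have hki : k' < i.val := by
            by_contra hle
            push_neg at hle
            rcases eq_or_ne i 0 with rfl | hne
            · omega
            · obtain ⟨j, rfl⟩ := Fin.eq_succ_of_ne_zero hne
              have hs := sval j
              have hvs : (j.succ).val = j.val + 1 := Fin.val_succ j
              have hj : m - k' ≤ (σ' j).val := (htop j).1 (by omega)
              rcases Nat.lt_or_ge (σ' j).val (σ 0).val with h | h
              · rw [if_pos h] at hs; omega
              · rw [if_neg (by omega)] at hs; omega
          have htail : ∀ z : Fin (m + 1), i ≤ z → σ z < σ 0 := by
            intro z hz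
            rcases eq_or_lt_of_le hz with rfl | hlt
            · exact Fin.lt_def.2 hsmall
            · by_contra hnot
              have hz0 : z ≠ 0 := by
                intro e
                have := Fin.lt_def.1 hlt
                rw [e] at this
                simp at this
              have hzne : σ z ≠ σ 0 := fun e => hz0 (σ.injective e)
              have : (σ 0).val < (σ z).val := by
                have : (σ z).val ≠ (σ 0).val := fun e => hzne (Fin.ext e)
                have := Fin.le_def.1 (not_lt.1 hnot)
                omega
              exact claim i z hlt hki hsmall this
          have hcount := count_tail_lt σ i (σ 0) htail
          omega
        rcases Nat.eq_zero_or_pos (σ 0).val with hv0 | hv0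
        · -- σ 0 = 0
          refine ⟨1, one_pos, by omega, Or.inl (fun i => ?_)⟩
          constructor
          · intro hi
            have hi0 : i = 0 := Fin.ext (by simpa using (by omega : i.val = 0))
            subst hi0
            omega
          · intro hi
            have : σ i = σ 0 := Fin.ext (by omega)
            have h := σ.injective this
            subst h
            simp
        · refine ⟨(m + 1) - (σ 0).val, by omega, by omega, Or.inr (perm_ge_iff σ (by omega) ?_)⟩
          intro i hi
          have he : (m + 1) - ((m + 1) - (σ 0).val) = (σ 0).val := by omega
          rw [he]
          exact hfin i hi

lemma sum_split {k l : ℕ} (σc : Perm (Fin (k + l)))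
    (Hc : ∀ x : Fin (k + l), x.val < k ↔ (σc x).val < k) :
    ∃ (σ₁ : Perm (Fin k)) (σ₂ : Perm (Fin l)), σc = directSum σ₁ σ₂ := by
  have g1 : ∀ i : Fin k, (σc (Fin.castAdd l i)).val < k := fun i => (Hc _).1 i.is_lt
  have g2 : ∀ i : Fin l, k ≤ (σc (Fin.natAdd k i)).val := by
    intro i
    by_contra h
    push_neg at h
    have := (Hc (Fin.natAdd k i)).2 h
    simp only [Fin.coe_natAdd] at this
    omega
  have hinj1 : Function.Injective (fun i : Fin k => (⟨(σc (Fin.castAdd l i)).val, g1 i⟩ : Fin k)) := by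
    intro a b hab
    simp only [Fin.mk.injEq] at hab
    have := congrArg Fin.val (σc.injective (Fin.ext hab))
    simp only [Fin.coe_castAdd] at this
    exact Fin.ext this
  have hinj2 : Function.Injective (fun i : Fin l =>
      (⟨(σc (Fin.natAdd k i)).val - k, by have := (σc (Fin.natAdd k i)).is_lt; have := g2 i; omega⟩ : Fin l)) := by
    intro a b hab
    simp only [Fin.mk.injEq] at hab
    have h2a := g2 a
    have h2b := g2 b
    have := congrArg Fin.val (σc.injective (Fin.ext (show (σc (Fin.natAdd k a)).val = (σc (Fin.natAdd k b)).val by omega)))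
    simp only [Fin.coe_natAdd] at this
    exact Fin.ext (by omega)
  refine ⟨Equiv.ofBijective _ (Finite.injective_iff_bijective.1 hinj1),
    Equiv.ofBijective _ (Finite.injective_iff_bijective.1 hinj2), Equiv.ext fun x => ?_⟩
  induction x using Fin.addCases with
  | left x =>
    rw [directSum_castAdd]
    exact Fin.ext rfl
  | right x =>
    rw [directSum_natAdd]
    refine Fin.ext ?_
    have := g2 x
    simp only [Fin.coe_natAdd, Equiv.ofBijective_apply]
    omega

lemma skew_split {k l : ℕ} (σc : Perm (Fin (k + l)))
    (Hc : ∀ x : Fin (k + l), x.val < k ↔ l ≤ (σc x).val) :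
    ∃ (σ₁ : Perm (Fin k)) (σ₂ : Perm (Fin l)), σc = skewSum σ₁ σ₂ := by
  have g1 : ∀ i : Fin k, l ≤ (σc (Fin.castAdd l i)).val := fun i => (Hc _).1 i.is_lt
  have g2 : ∀ i : Fin l, (σc (Fin.natAdd k i)).val < l := by
    intro i
    by_contra h
    push_neg at h
    have := (Hc (Fin.natAdd k i)).2 h
    simp only [Fin.coe_natAdd] at this
    omega
  have hinj1 : Function.Injective (fun i : Fin k =>
      (⟨(σc (Fin.castAdd l i)).val - l, by have := (σc (Fin.castAdd l i)).is_lt; have := g1 i; omega⟩ : Fin k)) := by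
    intro a b hab
    simp only [Fin.mk.injEq] at hab
    have h1a := g1 a
    have h1b := g1 b
    have := congrArg Fin.val (σc.injective (Fin.ext (show (σc (Fin.castAdd l a)).val = (σc (Fin.castAdd l b)).val by omega)))
    simp only [Fin.coe_castAdd] at this
    exact Fin.ext (by omega)
  have hinj2 : Function.Injective (fun i : Fin l => (⟨(σc (Fin.natAdd k i)).val, g2 i⟩ : Fin l)) := by
    intro a b hab
    simp only [Fin.mk.injEq] at hab
    have := congrArg Fin.val (σc.injective (Fin.ext hab))
    simp only [Fin.coe_natAdd] at this
    exact Fin.ext (by omega)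
  refine ⟨Equiv.ofBijective _ (Finite.injective_iff_bijective.1 hinj1),
    Equiv.ofBijective _ (Finite.injective_iff_bijective.1 hinj2), Equiv.ext fun x => ?_⟩
  induction x using Fin.addCases with
  | left x =>
    refine Fin.ext ?_
    rw [skewSum_castAdd]
    have := g1 x
    simp only [Equiv.ofBijective_apply]
    omega
  | right x =>
    refine Fin.ext ?_
    rw [skewSum_natAdd]
    rfl

lemma avoids_dsum_left {k l r : ℕ} (σ₁ : Perm (Fin k)) (σ₂ : Perm (Fin l)) (π : Perm (Fin r))
    (h : AvoidsPattern (directSum σ₁ σ₂) π) : AvoidsPattern σ₁ π := by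
  intro hc
  refine h (containsPattern_of_map (Fin.castAdd l) (fun a b hab => hab) (fun i j => ?_) hc)
  rw [directSum_castAdd, directSum_castAdd]
  simp only [Fin.lt_def, Fin.coe_castAdd]

lemma avoids_dsum_right {k l r : ℕ} (σ₁ : Perm (Fin k)) (σ₂ : Perm (Fin l)) (π : Perm (Fin r))
    (h : AvoidsPattern (directSum σ₁ σ₂) π) : AvoidsPattern σ₂ π := by
  intro hc
  refine h (containsPattern_of_map (Fin.natAdd k)
    (fun a b hab => Fin.lt_def.2 (by simp only [Fin.coe_natAdd]; exact Nat.add_lt_add_left (Fin.lt_def.1 hab) k))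
    (fun i j => ?_) hc)
  rw [directSum_natAdd, directSum_natAdd]
  simp only [Fin.lt_def, Fin.coe_natAdd]
  omega

lemma avoids_ssum_left {k l r : ℕ} (σ₁ : Perm (Fin k)) (σ₂ : Perm (Fin l)) (π : Perm (Fin r))
    (h : AvoidsPattern (skewSum σ₁ σ₂) π) : AvoidsPattern σ₁ π := by
  intro hc
  refine h (containsPattern_of_map (Fin.castAdd l) (fun a b hab => hab) (fun i j => ?_) hc)
  rw [Fin.lt_def, Fin.lt_def (a := skewSum σ₁ σ₂ (Fin.castAdd l i)), skewSum_castAdd, skewSum_castAdd]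
  omega

lemma avoids_ssum_right {k l r : ℕ} (σ₁ : Perm (Fin k)) (σ₂ : Perm (Fin l)) (π : Perm (Fin r))
    (h : AvoidsPattern (skewSum σ₁ σ₂) π) : AvoidsPattern σ₂ π := by
  intro hc
  refine h (containsPattern_of_map (Fin.natAdd k)
    (fun a b hab => Fin.lt_def.2 (by simp only [Fin.coe_natAdd]; exact Nat.add_lt_add_left (Fin.lt_def.1 hab) k))
    (fun i j => ?_) hc)
  rw [Fin.lt_def, Fin.lt_def (a := skewSum σ₁ σ₂ (Fin.natAdd k i)), skewSum_natAdd, skewSum_natAdd]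

theorem avoids_separable : ∀ n : ℕ, 0 < n → ∀ σ : Perm (Fin n),
    AvoidsPattern σ perm2413 → AvoidsPattern σ perm3142 → Separable σ := by
  intro n
  induction n using Nat.strong_induction_on with
  | _ n ih =>
  intro hn σ ha hb
  rcases eq_or_lt_of_le (show 1 ≤ n from hn) with h1 | h1
  · subst h1
    have : σ = Equiv.refl (Fin 1) := Equiv.ext fun x => Subsingleton.elim _ _
    rw [this]
    exact Separable.single
  · obtain ⟨k, hkpos, hklt, hcase⟩ := decomposable n (by omega) σ ha hb
    obtain ⟨l, rfl⟩ : ∃ l, n = k + l := ⟨n - k, by omega⟩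
    have hl : 0 < l := by omega
    rcases hcase with H | H
    · obtain ⟨σ₁, σ₂, rfl⟩ := sum_split σ H
      exact Separable.dsum
        (ih k (by omega) hkpos σ₁ (avoids_dsum_left _ _ _ ha) (avoids_dsum_left _ _ _ hb))
        (ih l (by omega) hl σ₂ (avoids_dsum_right _ _ _ ha) (avoids_dsum_right _ _ _ hb))
    · have H' : ∀ x : Fin (k + l), x.val < k ↔ l ≤ (σ x).val := by
        intro x
        have := H x
        omega
      obtain ⟨σ₁, σ₂, rfl⟩ := skew_split σ H'
      exact Separable.ssum
        (ih k (by omega) hkpos σ₁ (avoids_ssum_left _ _ _ ha) (avoids_ssum_left _ _ _ hb))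
        (ih l (by omega) hl σ₂ (avoids_ssum_right _ _ _ ha) (avoids_ssum_right _ _ _ hb))


/-- A permutation avoids both 2413 and 3142 iff it is separable. -/
theorem separable_iff_avoids_2413_3142 {n : ℕ} (hn : 0 < n) (σ : Equiv.Perm (Fin n)) :
    (AvoidsPattern σ perm2413 ∧ AvoidsPattern σ perm3142) ↔ Separable σ :=
  ⟨fun h => avoids_separable n hn σ h.1 h.2, fun h => separable_avoids h⟩
end

section
/- The number s_n of separable permutations of [n] satisfies the recurrence s_n = s_1 s_{n−1} + (1/2)∑_{j=2}^{n−1} s_j s_{n−j} + (1/2) s_n for all n ≥ 2, with s_1 = 1. -/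
open Equiv Finset Filter Topology

variable {k l : ℕ} (σ : Equiv.Perm (Fin k)) (τ : Equiv.Perm (Fin l))

lemma ds_left (i : Fin k) : directSum σ τ (Fin.castAdd l i) = Fin.castAdd l (σ i) := by
  simp [directSum]

lemma ds_right (i : Fin l) : directSum σ τ (Fin.natAdd k i) = Fin.natAdd k (τ i) := by
  simp [directSum]

lemma ss_left (i : Fin k) : ((skewSum σ τ (Fin.castAdd l i)) : ℕ) = l + σ i := by
  simp [skewSum]; try omega

lemma ss_right (i : Fin l) : ((skewSum σ τ (Fin.natAdd k i)) : ℕ) = τ i := by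
  simp [skewSum]; try omega

lemma ds_val_lt (i : Fin (k + l)) (h : (i : ℕ) < k) :
    ((directSum σ τ) i : ℕ) = σ ⟨i, h⟩ := by
  have hi : i = Fin.castAdd l ⟨i, h⟩ := by ext; rfl
  conv_lhs => rw [hi, ds_left]
  rfl

lemma ds_val_ge (i : Fin (k + l)) (h : k ≤ (i : ℕ)) :
    ((directSum σ τ) i : ℕ) = k + τ ⟨(i : ℕ) - k, by omega⟩ := by
  have hi : i = Fin.natAdd k ⟨(i : ℕ) - k, by omega⟩ := by ext; simp; omega
  conv_lhs => rw [hi, ds_right]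
  simp

lemma ss_val_lt (i : Fin (k + l)) (h : (i : ℕ) < k) :
    ((skewSum σ τ) i : ℕ) = l + σ ⟨i, h⟩ := by
  have hi : i = Fin.castAdd l ⟨i, h⟩ := by ext; rfl
  conv_lhs => rw [hi]
  rw [ss_left]

lemma ss_val_ge (i : Fin (k + l)) (h : k ≤ (i : ℕ)) :
    ((skewSum σ τ) i : ℕ) = τ ⟨(i : ℕ) - k, by omega⟩ := by
  have hi : i = Fin.natAdd k ⟨(i : ℕ) - k, by omega⟩ := by ext; simp; omega
  conv_lhs => rw [hi]
  rw [ss_right]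




lemma sep_pos {n : ℕ} {σ : Equiv.Perm (Fin n)} (h : Separable σ) : 1 ≤ n := by
  induction h with
  | single => norm_num
  | dsum _ _ ih1 ih2 => omega
  | ssum _ _ ih1 ih2 => omega

/-- `σ` maps `[0,k)` into `[0,k)`. -/
def SplitsAt {n : ℕ} (σ : Equiv.Perm (Fin n)) (m : ℕ) : Prop :=
  ∀ i : Fin n, (i : ℕ) < m → ((σ i : ℕ) < m)

lemma splitsAt_symm {n : ℕ} {σ : Equiv.Perm (Fin n)} {m : ℕ} (h : SplitsAt σ m) :
    SplitsAt σ.symm m := by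
  classical
  intro j hj
  set S : Finset (Fin n) := Finset.univ.filter (fun i => (i : ℕ) < m) with hS
  have hsub : S.image σ ⊆ S := by
    intro x hx
    simp only [hS, Finset.mem_image, Finset.mem_filter, Finset.mem_univ, true_and] at hx ⊢
    obtain ⟨i, hi, rfl⟩ := hx
    exact h i hi
  have hcard : S.card ≤ (S.image σ).card := by
    rw [Finset.card_image_of_injective _ σ.injective]
  have heq : S.image σ = S := Finset.eq_of_subset_of_card_le hsub hcard
  have hjS : j ∈ S := by simp [hS, hj]
  rw [← heq] at hjS
  simp only [Finset.mem_image, hS, Finset.mem_filter, Finset.mem_univ, true_and] at hjS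
  obtain ⟨i, hi, hij⟩ := hjS
  have : σ.symm j = i := by rw [← hij]; simp
  rw [this]; exact hi

lemma directSum_splitsAt : SplitsAt (directSum σ τ) k := by
  intro i hi
  rw [ds_val_lt σ τ i hi]
  exact (σ _).2

/-- A skew sum of nonempty parts has no nontrivial split point. -/
lemma skewSum_not_splitsAt (hk : 1 ≤ k) (hl : 1 ≤ l) {m : ℕ} (hm1 : 1 ≤ m)
    (hm2 : m < k + l) : ¬ SplitsAt (skewSum σ τ) m := by
  intro h
  have hsymm := splitsAt_symm h
  -- preimage of 0 is in the second block
  have h0 : ((skewSum σ τ).symm ⟨0, by omega⟩ : ℕ) < m := hsymm _ (by simp only [Fin.val_mk]; omega)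
  -- but every element of [0,l) has preimage ≥ k
  by_cases hc : (((skewSum σ τ).symm ⟨0, by omega⟩ : Fin (k+l)) : ℕ) < k
  · have := ss_val_lt σ τ _ hc
    rw [Equiv.apply_symm_apply] at this
    simp at this; omega
  · -- preimage of 0 ≥ k, so m > k; then consider preimage of k+l-1, which is < k < m,
    -- but its image k+l-1 ≥ m. Contradiction with SplitsAt.
    push_neg at hc
    have hmk : k < m := by omega
    set j : Fin (k + l) := (skewSum σ τ).symm ⟨k + l - 1, by omega⟩ with hj
    have hval : ((skewSum σ τ) j : ℕ) = k + l - 1 := by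
      rw [hj, Equiv.apply_symm_apply]
    have hjlt : (j : ℕ) < k := by
      by_contra hge
      push_neg at hge
      have h2 := ss_val_ge σ τ j hge
      rw [h2] at hval
      have := (τ (⟨(j : ℕ) - k, by omega⟩ : Fin l)).2
      omega
    have := h j (by omega)
    omega

def castPerm {n m : ℕ} (h : n = m) (σ : Equiv.Perm (Fin n)) : Equiv.Perm (Fin m) :=
  (finCongr h).permCongr σ

@[simp] lemma castPerm_val {n m : ℕ} (h : n = m) (σ : Equiv.Perm (Fin n)) (i : Fin m) :
    ((castPerm h σ) i : ℕ) = σ ⟨i, by omega⟩ := by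
  subst h
  simp [castPerm]
  try congr

lemma sep_castPerm {n m : ℕ} (h : n = m) {σ : Equiv.Perm (Fin n)} (hs : Separable σ) :
    Separable (castPerm h σ) := by
  subst h
  have : castPerm rfl σ = σ := by ext i; simp [castPerm]
  rwa [this]

variable {n : ℕ}

/-- Left component of a permutation that splits at `m`. -/
def leftPerm (σ : Equiv.Perm (Fin n)) (m : ℕ) (hm : m ≤ n) (hs : SplitsAt σ m) :
    Equiv.Perm (Fin m) where
  toFun i := ⟨σ ⟨i, lt_of_lt_of_le i.2 hm⟩, hs _ i.2⟩
  invFun i := ⟨σ.symm ⟨i, lt_of_lt_of_le i.2 hm⟩, splitsAt_symm hs _ i.2⟩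
  left_inv i := by ext; simp
  right_inv i := by ext; simp

/-- Right component of a permutation that splits at `m`. -/
def rightPerm (σ : Equiv.Perm (Fin n)) (m : ℕ) (hm : m ≤ n) (hs : SplitsAt σ m) :
    Equiv.Perm (Fin (n - m)) where
  toFun i := ⟨(σ ⟨m + i, by omega⟩ : ℕ) - m, by
    have h2 : ¬ ((σ ⟨m + i, by omega⟩ : ℕ) < m) := by
      intro hlt
      have := splitsAt_symm hs _ hlt
      simp at this
      try omega
    have := (σ ⟨m + i, by omega⟩).2
    omega⟩
  invFun i := ⟨(σ.symm ⟨m + i, by omega⟩ : ℕ) - m, by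
    have h2 : ¬ ((σ.symm ⟨m + i, by omega⟩ : ℕ) < m) := by
      intro hlt
      have := hs _ hlt
      simp at this
      try omega
    have := (σ.symm ⟨m + i, by omega⟩).2
    omega⟩
  left_inv i := by
    have h2 : ¬ ((σ ⟨m + i, by omega⟩ : ℕ) < m) := by
      intro hlt
      have := splitsAt_symm hs _ hlt
      simp at this
      try omega
    ext
    simp only
    have hcast : (⟨m + ((σ ⟨m + i, by omega⟩ : ℕ) - m), by omega⟩ : Fin n)
        = σ ⟨m + i, by omega⟩ := by ext; simp; omega
    rw [hcast]
    simp
  right_inv i := by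
    have h2 : ¬ ((σ.symm ⟨m + i, by omega⟩ : ℕ) < m) := by
      intro hlt
      have := hs _ hlt
      simp at this
      try omega
    ext
    simp only
    have hcast : (⟨m + ((σ.symm ⟨m + i, by omega⟩ : ℕ) - m), by omega⟩ : Fin n)
        = σ.symm ⟨m + i, by omega⟩ := by ext; simp; omega
    rw [hcast]
    simp

@[simp] lemma leftPerm_val (σ : Equiv.Perm (Fin n)) (m : ℕ) (hm : m ≤ n) (hs : SplitsAt σ m)
    (i : Fin m) : ((leftPerm σ m hm hs) i : ℕ) = σ ⟨i, by omega⟩ := rfl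

@[simp] lemma rightPerm_val (σ : Equiv.Perm (Fin n)) (m : ℕ) (hm : m ≤ n) (hs : SplitsAt σ m)
    (i : Fin (n - m)) : ((rightPerm σ m hm hs) i : ℕ) = (σ ⟨m + i, by omega⟩ : ℕ) - m := rfl

lemma rightPerm_val_ge (σ : Equiv.Perm (Fin n)) (m : ℕ) (hm : m ≤ n) (hs : SplitsAt σ m)
    (i : Fin (n - m)) : m ≤ (σ ⟨m + i, by omega⟩ : ℕ) := by
  by_contra hlt
  push_neg at hlt
  have := splitsAt_symm hs _ hlt
  simp at this
  try omega

/-- Recomposition: a permutation splitting at `m` is the direct sum of its components. -/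
lemma eq_directSum_components (σ : Equiv.Perm (Fin n)) (m : ℕ) (hm : m ≤ n) (hs : SplitsAt σ m) :
    σ = castPerm (by omega) (directSum (leftPerm σ m hm hs) (rightPerm σ m hm hs)) := by
  ext i
  rw [castPerm_val]
  by_cases h : (i : ℕ) < m
  · rw [ds_val_lt _ _ _ h]
    simp
  · push_neg at h
    rw [ds_val_ge _ _ _ h]
    rw [rightPerm_val]
    have := rightPerm_val_ge σ m hm hs ⟨(i:ℕ) - m, by omega⟩
    simp only at this ⊢
    have hcast : (⟨m + ((i:ℕ) - m), by omega⟩ : Fin n) = i := by ext; simp; omega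
    rw [hcast] at this ⊢
    omega

/-- Complement of a permutation: `i ↦ n - 1 - σ i`. -/
def pcompl (σ : Equiv.Perm (Fin n)) : Equiv.Perm (Fin n) := σ.trans (Equiv.mk Fin.rev Fin.rev Fin.rev_rev Fin.rev_rev)

@[simp] lemma compl_val (σ : Equiv.Perm (Fin n)) (i : Fin n) :
    ((pcompl σ) i : ℕ) = n - 1 - σ i := by
  simp [pcompl, Fin.rev]
  omega

@[simp] lemma pcompl_invol (σ : Equiv.Perm (Fin n)) : pcompl (pcompl σ) = σ := by
  ext i
  have h1 := compl_val (pcompl σ) i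
  have h2 := compl_val σ i
  have := (σ i).2
  omega

lemma compl_directSum : pcompl (directSum σ τ) = skewSum (pcompl σ) (pcompl τ) := by
  ext i
  rw [compl_val]
  by_cases h : (i : ℕ) < k
  · rw [ds_val_lt _ _ _ h, ss_val_lt _ _ _ h, compl_val]
    have := (σ ⟨i, h⟩).2
    have := (σ ⟨(i:ℕ), h⟩).2
    omega
  · push_neg at h
    rw [ds_val_ge _ _ _ h, ss_val_ge _ _ _ h, compl_val]
    have := (τ (⟨(i:ℕ) - k, by omega⟩ : Fin l)).2
    omega

lemma compl_skewSum : pcompl (skewSum σ τ) = directSum (pcompl σ) (pcompl τ) := by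
  have := compl_directSum (pcompl σ) (pcompl τ)
  rw [pcompl_invol, pcompl_invol] at this
  rw [← this, pcompl_invol]

lemma sep_compl {σ : Equiv.Perm (Fin n)} (h : Separable σ) : Separable (pcompl σ) := by
  induction h with
  | single =>
    have : pcompl (Equiv.refl (Fin 1)) = Equiv.refl (Fin 1) := by
      ext i
      have := compl_val (Equiv.refl (Fin 1)) i
      have := i.2
      omega
    rw [this]; exact Separable.single
  | dsum h1 h2 ih1 ih2 => rw [compl_directSum]; exact Separable.ssum ih1 ih2
  | ssum h1 h2 ih1 ih2 => rw [compl_skewSum]; exact Separable.dsum ih1 ih2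

/-- `σ` is a nontrivial direct sum (plus-decomposable). -/
def HasSplit {n : ℕ} (σ : Equiv.Perm (Fin n)) : Prop :=
  ∃ m, 1 ≤ m ∧ m < n ∧ SplitsAt σ m

lemma hasSplit_compl_iff {σ : Equiv.Perm (Fin n)} (h : Separable σ) (hn : 2 ≤ n) :
    HasSplit (pcompl σ) ↔ ¬ HasSplit σ := by
  cases h with
  | single => omega
  | @dsum a b σ₁ σ₂ h1 h2 =>
    have ha := sep_pos h1
    have hb := sep_pos h2
    constructor
    · intro hc _
      rw [compl_directSum] at hc
      obtain ⟨m, hm1, hm2, hm3⟩ := hc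
      exact skewSum_not_splitsAt _ _ ha hb hm1 hm2 hm3
    · intro hc
      exact absurd ⟨a, ha, by omega, directSum_splitsAt σ₁ σ₂⟩ hc
  | @ssum a b σ₁ σ₂ h1 h2 =>
    have ha := sep_pos h1
    have hb := sep_pos h2
    constructor
    · intro _ hc
      obtain ⟨m, hm1, hm2, hm3⟩ := hc
      exact skewSum_not_splitsAt _ _ ha hb hm1 hm2 hm3
    · intro _
      rw [compl_skewSum]
      exact ⟨a, ha, by omega, directSum_splitsAt _ _⟩

lemma val_congr {n : ℕ} (σ : Equiv.Perm (Fin n)) {i j : Fin n} (h : (i : ℕ) = (j : ℕ)) :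
    (σ i : ℕ) = σ j := by rw [Fin.ext h]

lemma perm_ext_val {n : ℕ} {σ τ : Equiv.Perm (Fin n)} (h : ∀ i : Fin n, (σ i : ℕ) = (τ i : ℕ)) :
    σ = τ := by
  ext i
  exact congrArg _ (Fin.ext (h i))

section flat
variable {k l : ℕ} (σ : Equiv.Perm (Fin k)) (τ : Equiv.Perm (Fin l))

lemma ds_lt (x : ℕ) (hx : x < k) (hx2 : x < k + l) :
    ((directSum σ τ) ⟨x, hx2⟩ : ℕ) = σ ⟨x, hx⟩ :=
  ds_val_lt σ τ ⟨x, hx2⟩ hx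

lemma ds_ge (x : ℕ) (hx : k ≤ x) (hx2 : x < k + l) :
    ((directSum σ τ) ⟨x, hx2⟩ : ℕ) = k + τ ⟨x - k, by omega⟩ :=
  ds_val_ge σ τ ⟨x, hx2⟩ hx

variable {n : ℕ} (ρ : Equiv.Perm (Fin n))

lemma lpv (m : ℕ) (hm : m ≤ n) (hs : SplitsAt ρ m) (x : ℕ) (hx : x < m) :
    ((leftPerm ρ m hm hs) ⟨x, hx⟩ : ℕ) = ρ ⟨x, by omega⟩ := rfl

lemma rpv (m : ℕ) (hm : m ≤ n) (hs : SplitsAt ρ m) (x : ℕ) (hx : x < n - m) :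
    ((rightPerm ρ m hm hs) ⟨x, hx⟩ : ℕ) = (ρ ⟨m + x, by omega⟩ : ℕ) - m := rfl

lemma cpv {m : ℕ} (h : n = m) (x : ℕ) (hx : x < m) :
    ((castPerm h ρ) ⟨x, hx⟩ : ℕ) = ρ ⟨x, by omega⟩ := by
  rw [castPerm_val]

end flat

set_option maxHeartbeats 3200000 in
theorem sep_components {n : ℕ} {σ : Equiv.Perm (Fin n)} (h : Separable σ) :
    ∀ m, 1 ≤ m → (h2 : m < n) → (hs : SplitsAt σ m) →
      Separable (leftPerm σ m h2.le hs) ∧ Separable (rightPerm σ m h2.le hs) := by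
  induction h with
  | single => intro m hm1 hm2 hs; omega
  | @dsum a b σ₁ σ₂ h1 h2 ih1 ih2 =>
    intro m hm1 hm2 hs
    have ha := sep_pos h1
    have hb := sep_pos h2
    rcases lt_trichotomy m a with hlt | rfl | hgt
    · -- split inside the first block
      have hs1 : SplitsAt σ₁ m := by
        intro i hi
        have h := hs ⟨(i:ℕ), by omega⟩ hi
        rw [ds_lt σ₁ σ₂ (i:ℕ) (by omega)] at h
        have e1 := val_congr σ₁ (show ((⟨(i:ℕ), by omega⟩ : Fin a) : ℕ) = (i:ℕ) from rfl)
        omega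
      obtain ⟨L1, R1⟩ := ih1 m hm1 hlt hs1
      constructor
      · have heq : leftPerm (directSum σ₁ σ₂) m hm2.le hs = leftPerm σ₁ m hlt.le hs1 := by
          apply perm_ext_val
          intro i
          rw [leftPerm_val, leftPerm_val, ds_lt σ₁ σ₂ (i:ℕ) (by omega)]
        rw [heq]; exact L1
      · have heq : rightPerm (directSum σ₁ σ₂) m hm2.le hs
            = castPerm (by omega) (directSum (rightPerm σ₁ m hlt.le hs1) σ₂) := by
          apply perm_ext_val
          intro i
          rw [rightPerm_val, castPerm_val]
          by_cases hc : (i : ℕ) < a - m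
          · rw [ds_lt σ₁ σ₂ (m + (i:ℕ)) (by omega),
              ds_lt (rightPerm σ₁ m hlt.le hs1) σ₂ (i:ℕ) (by omega),
              rpv σ₁ m hlt.le hs1 (i:ℕ) (by omega)]
          · push_neg at hc
            rw [ds_ge σ₁ σ₂ (m + (i:ℕ)) (by omega),
              ds_ge (rightPerm σ₁ m hlt.le hs1) σ₂ (i:ℕ) (by omega)]
            have e1 := val_congr σ₂ (show ((⟨m + (i:ℕ) - a, by omega⟩ : Fin b) : ℕ)
              = ((⟨(i:ℕ) - (a - m), by omega⟩ : Fin b) : ℕ) by simp only [Fin.val_mk]; omega)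
            have e2 := (σ₂ (⟨m + (i:ℕ) - a, by omega⟩ : Fin b)).2
            omega
        rw [heq]; exact sep_castPerm _ (Separable.dsum R1 h2)
    · -- split exactly at the junction
      constructor
      · have heq : leftPerm (directSum σ₁ σ₂) m hm2.le hs = σ₁ := by
          apply perm_ext_val
          intro i
          rw [leftPerm_val, ds_lt σ₁ σ₂ (i:ℕ) (by omega)]
          try exact val_congr σ₁ rfl
        rw [heq]; exact h1
      · have heq : rightPerm (directSum σ₁ σ₂) m hm2.le hs = castPerm (by omega) σ₂ := by
          apply perm_ext_val
          intro i
          rw [rightPerm_val, castPerm_val, ds_ge σ₁ σ₂ (m + (i:ℕ)) (by omega)]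
          have e1 := val_congr σ₂ (show ((⟨m + (i:ℕ) - m, by omega⟩ : Fin b) : ℕ)
            = ((⟨(i:ℕ), by omega⟩ : Fin b) : ℕ) by simp only [Fin.val_mk]; omega)
          have e2 := (σ₂ (⟨m + (i:ℕ) - m, by omega⟩ : Fin b)).2
          omega
        rw [heq]; exact sep_castPerm _ h2
    · -- split inside the second block
      have hs2 : SplitsAt σ₂ (m - a) := by
        intro i hi
        have h := hs ⟨a + (i:ℕ), by omega⟩ (show a + (i:ℕ) < m by omega)
        rw [ds_ge σ₁ σ₂ (a + (i:ℕ)) (by omega)] at h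
        have e1 := val_congr σ₂ (show ((⟨a + (i:ℕ) - a, by omega⟩ : Fin b) : ℕ) = (i:ℕ)
          by simp only [Fin.val_mk]; omega)
        omega
      obtain ⟨L2, R2⟩ := ih2 (m - a) (by omega) (by omega) hs2
      constructor
      · have heq : leftPerm (directSum σ₁ σ₂) m hm2.le hs
            = castPerm (by omega) (directSum σ₁ (leftPerm σ₂ (m-a) (by omega : m - a ≤ b) hs2)) := by
          apply perm_ext_val
          intro i
          rw [leftPerm_val, castPerm_val]
          by_cases hc : (i : ℕ) < a
          · rw [ds_lt σ₁ σ₂ (i:ℕ) (by omega),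
              ds_lt σ₁ (leftPerm σ₂ (m-a) (by omega : m - a ≤ b) hs2) (i:ℕ) (by omega)]
          · push_neg at hc
            rw [ds_ge σ₁ σ₂ (i:ℕ) (by omega),
              ds_ge σ₁ (leftPerm σ₂ (m-a) (by omega : m - a ≤ b) hs2) (i:ℕ) (by omega),
              lpv σ₂ (m-a) (by omega : m - a ≤ b) hs2 ((i:ℕ) - a) (by omega)]
        rw [heq]; exact sep_castPerm _ (Separable.dsum h1 L2)
      · have heq : rightPerm (directSum σ₁ σ₂) m hm2.le hs
            = castPerm (by omega) (rightPerm σ₂ (m-a) (by omega : m - a ≤ b) hs2) := by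
          apply perm_ext_val
          intro i
          rw [rightPerm_val, castPerm_val,
            rpv σ₂ (m-a) (by omega : m - a ≤ b) hs2 (i:ℕ) (by omega),
            ds_ge σ₁ σ₂ (m + (i:ℕ)) (by omega)]
          have e1 := val_congr σ₂ (show ((⟨m + (i:ℕ) - a, by omega⟩ : Fin b) : ℕ)
            = ((⟨(m - a) + (i:ℕ), by omega⟩ : Fin b) : ℕ) by simp only [Fin.val_mk]; omega)
          have e2 := (σ₂ (⟨m + (i:ℕ) - a, by omega⟩ : Fin b)).2
          omega
        rw [heq]; exact sep_castPerm _ R2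
  | @ssum a b σ₁ σ₂ h1 h2 ih1 ih2 =>
    intro m hm1 hm2 hs
    exact absurd hs (skewSum_not_splitsAt _ _ (sep_pos h1) (sep_pos h2) hm1 hm2)

lemma castPerm_rfl {n : ℕ} (σ : Equiv.Perm (Fin n)) : castPerm rfl σ = σ := by
  ext i; simp [castPerm]

lemma splitsAt_castPerm {n m k : ℕ} (h : n = m) {σ : Equiv.Perm (Fin n)}
    (hs : SplitsAt σ k) : SplitsAt (castPerm h σ) k := by
  subst h; rwa [castPerm_rfl]

/-- Flat value lemma for a cast direct sum, left part. -/
lemma Fv_lt {j n : ℕ} (h : j + (n - j) = n) (α : Equiv.Perm (Fin j))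
    (β : Equiv.Perm (Fin (n - j))) (x : ℕ) (hx : x < j) (hx2 : x < n) :
    ((castPerm h (directSum α β)) ⟨x, hx2⟩ : ℕ) = α ⟨x, hx⟩ := by
  rw [cpv, ds_lt α β x hx]

lemma Fv_ge {j n : ℕ} (h : j + (n - j) = n) (α : Equiv.Perm (Fin j))
    (β : Equiv.Perm (Fin (n - j))) (x : ℕ) (hx : j ≤ x) (hx2 : x < n) :
    ((castPerm h (directSum α β)) ⟨x, hx2⟩ : ℕ) = j + β ⟨x - j, by omega⟩ := by
  rw [cpv, ds_ge α β x hx]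

/-- Separable permutations with no nontrivial split point (plus-indecomposable). -/
def Indec (j : ℕ) : Type := {σ : Equiv.Perm (Fin j) // Separable σ ∧ ¬ HasSplit σ}

/-- Separable permutations with a split point (plus-decomposable). -/
def Decomp (n : ℕ) : Type := {σ : Equiv.Perm (Fin n) // Separable σ ∧ HasSplit σ}

noncomputable def numIndec (j : ℕ) : ℕ := Nat.card (Indec j)

instance (j : ℕ) : Finite (Indec j) := by unfold Indec; infer_instance
instance (n : ℕ) : Finite (Decomp n) := by unfold Decomp; infer_instance

lemma numSep_one : numSep 1 = 1 := by
  have hu : ∀ σ : Equiv.Perm (Fin 1), σ = Equiv.refl (Fin 1) := fun σ => by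
    ext i
    have h1 : σ i = 0 := Fin.eq_zero _
    have h2 : i = 0 := Fin.eq_zero _
    simp [h1, h2]
  rw [numSep]
  haveI : Unique {σ : Equiv.Perm (Fin 1) // Separable σ} :=
    { default := ⟨Equiv.refl (Fin 1), Separable.single⟩
      uniq := fun σ => Subtype.ext (hu σ.1) }
  exact Nat.card_unique

lemma numIndec_one : numIndec 1 = 1 := by
  have hu : ∀ σ : Equiv.Perm (Fin 1), σ = Equiv.refl (Fin 1) := fun σ => by
    ext i
    have h1 : σ i = 0 := Fin.eq_zero _
    have h2 : i = 0 := Fin.eq_zero _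
    simp [h1, h2]
  rw [numIndec]
  haveI : Unique (Indec 1) :=
    { default := ⟨Equiv.refl (Fin 1), Separable.single, by rintro ⟨m, h1, h2, -⟩; omega⟩
      uniq := fun σ => Subtype.ext (hu σ.1) }
  exact Nat.card_unique

/-- `s_n = |P_n| + |M_n|`. -/
lemma numSep_eq_decomp_add_indec (n : ℕ) :
    numSep n = Nat.card (Decomp n) + Nat.card (Indec n) := by
  classical
  have e : {σ : Equiv.Perm (Fin n) // Separable σ} ≃ Decomp n ⊕ Indec n := by
    refine ((Equiv.sumCompl (fun s : {σ : Equiv.Perm (Fin n) // Separable σ} =>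
      HasSplit s.1)).symm).trans (Equiv.sumCongr ?_ ?_)
    · exact (Equiv.subtypeSubtypeEquivSubtypeInter (fun σ => Separable σ) (fun σ => HasSplit σ))
    · exact (Equiv.subtypeSubtypeEquivSubtypeInter (fun σ => Separable σ) (fun σ => ¬ HasSplit σ))
  rw [numSep, Nat.card_congr e, Nat.card_sum]

/-- `|P_n| = |M_n|` for `n ≥ 2`, via complementation. -/
lemma card_decomp_eq_indec {n : ℕ} (hn : 2 ≤ n) :
    Nat.card (Decomp n) = Nat.card (Indec n) := by
  refine Nat.card_congr ⟨fun s => ⟨pcompl s.1, sep_compl s.2.1,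
      fun hc => (hasSplit_compl_iff s.2.1 hn).mp hc s.2.2⟩,
    fun s => ⟨pcompl s.1, sep_compl s.2.1,
      (hasSplit_compl_iff s.2.1 hn).mpr s.2.2⟩,
    fun s => Subtype.ext (pcompl_invol s.1),
    fun s => Subtype.ext (pcompl_invol s.1)⟩

lemma nat_card_sigma {ι : Type*} [Fintype ι] (f : ι → Type*) [∀ i, Finite (f i)] :
    Nat.card (Σ i, f i) = ∑ i, Nat.card (f i) := by
  letI : ∀ i, Fintype (f i) := fun i => Fintype.ofFinite _
  simp [Nat.card_eq_fintype_card, Fintype.card_sigma]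

/-- Triples `(j, α, β)` with `α` indecomposable separable of size `j` and `β` separable. -/
def Tri (n : ℕ) : Type :=
  Σ j : (Finset.Icc 1 (n-1)), (Indec (j : ℕ) × {β : Equiv.Perm (Fin (n - (j : ℕ))) // Separable β})

lemma Tri.bound {n : ℕ} (j : Finset.Icc 1 (n-1)) : 1 ≤ (j:ℕ) ∧ (j:ℕ) ≤ n - 1 ∧ 2 ≤ n := by
  have := j.2
  rw [Finset.mem_Icc] at this
  omega

/-- The recomposition map. -/
noncomputable def FF {n : ℕ} (t : Tri n) : Decomp n :=
  ⟨castPerm (by have := Tri.bound t.1; omega) (directSum t.2.1.1 t.2.2.1),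
    sep_castPerm _ (Separable.dsum t.2.1.2.1 t.2.2.2),
    ⟨(t.1 : ℕ), (Tri.bound t.1).1, by have := Tri.bound t.1; omega,
      splitsAt_castPerm _ (directSum_splitsAt _ _)⟩⟩

lemma FF_splits {n : ℕ} (t : Tri n) : SplitsAt (FF t).1 (t.1 : ℕ) :=
  splitsAt_castPerm _ (directSum_splitsAt _ _)

lemma FF_not_splits_below {n : ℕ} (t : Tri n) {m : ℕ} (hm1 : 1 ≤ m) (hm2 : m < (t.1 : ℕ)) :
    ¬ SplitsAt (FF t).1 m := by
  obtain ⟨j, ⟨α, hα⟩, ⟨β, hβ⟩⟩ := t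
  obtain ⟨hb1, hb2⟩ := Finset.mem_Icc.mp j.2
  have hm2' : m < (j : ℕ) := hm2
  intro hsp
  refine hα.2 ⟨m, hm1, hm2', ?_⟩
  intro i hi
  have hij : (i : ℕ) < (j : ℕ) := i.2
  have h := hsp ⟨(i:ℕ), by omega⟩ hi
  simp only [FF] at h
  rw [Fv_lt _ _ _ (i:ℕ) hij] at h
  have e1 := val_congr α (show ((⟨(i:ℕ), hij⟩ : Fin (j:ℕ)) : ℕ) = (i:ℕ) from rfl)
  omega

lemma FF_fst_eq {n : ℕ} {t t' : Tri n} (hval : (FF t).1 = (FF t').1) :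
    (t.1 : ℕ) = (t'.1 : ℕ) := by
  obtain ⟨hb1, hb2⟩ := Finset.mem_Icc.mp t.1.2
  obtain ⟨hb1', hb2'⟩ := Finset.mem_Icc.mp t'.1.2
  rcases lt_trichotomy (t.1 : ℕ) (t'.1 : ℕ) with hlt | he | hgt
  · exfalso
    have h1 := FF_splits t
    rw [hval] at h1
    exact FF_not_splits_below t' (by omega) hlt h1
  · exact he
  · exfalso
    have h1 := FF_splits t'
    rw [← hval] at h1
    exact FF_not_splits_below t (by omega) hgt h1

lemma FF_injective {n : ℕ} : Function.Injective (FF (n := n)) := by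
  rintro ⟨j, ⟨α, hα⟩, ⟨β, hβ⟩⟩ ⟨j', ⟨α', hα'⟩, ⟨β', hβ'⟩⟩ heq
  have hval : (FF ⟨j, ⟨α, hα⟩, ⟨β, hβ⟩⟩).1 = (FF ⟨j', ⟨α', hα'⟩, ⟨β', hβ'⟩⟩).1 :=
    congrArg Subtype.val heq
  have hjj : j = j' := Subtype.ext (FF_fst_eq hval)
  subst hjj
  obtain ⟨hb1, hb2⟩ := Finset.mem_Icc.mp j.2
  have hv : ∀ x : Fin n, (((FF ⟨j, ⟨α, hα⟩, ⟨β, hβ⟩⟩).1) x : ℕ)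
      = (((FF ⟨j, ⟨α', hα'⟩, ⟨β', hβ'⟩⟩).1) x : ℕ) := fun x => by rw [hval]
  have hαα : α = α' := by
    apply perm_ext_val
    intro i
    have hi : (i : ℕ) < (j : ℕ) := i.2
    have h := hv ⟨(i:ℕ), by omega⟩
    simp only [FF] at h
    rw [Fv_lt _ _ _ (i:ℕ) hi, Fv_lt _ _ _ (i:ℕ) hi] at h
    have e1 := val_congr α (show ((⟨(i:ℕ), hi⟩ : Fin (j:ℕ)) : ℕ) = (i:ℕ) from rfl)
    have e2 := val_congr α' (show ((⟨(i:ℕ), hi⟩ : Fin (j:ℕ)) : ℕ) = (i:ℕ) from rfl)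
    omega
  have hββ : β = β' := by
    apply perm_ext_val
    intro i
    have hi : (i : ℕ) < n - (j : ℕ) := i.2
    have h := hv ⟨(j:ℕ) + (i:ℕ), by omega⟩
    simp only [FF] at h
    rw [Fv_ge _ α β ((j:ℕ) + (i:ℕ)) (by omega), Fv_ge _ α' β' ((j:ℕ) + (i:ℕ)) (by omega)] at h
    have e1 := val_congr β (show ((⟨(j:ℕ) + (i:ℕ) - (j:ℕ), by omega⟩ : Fin (n - (j:ℕ))) : ℕ) = (i:ℕ)
      by simp only [Fin.val_mk]; omega)
    have e2 := val_congr β' (show ((⟨(j:ℕ) + (i:ℕ) - (j:ℕ), by omega⟩ : Fin (n - (j:ℕ))) : ℕ) = (i:ℕ)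
      by simp only [Fin.val_mk]; omega)
    omega
  subst hαα
  subst hββ
  rfl

lemma FF_surjective {n : ℕ} (hn : 2 ≤ n) : Function.Surjective (FF (n := n)) := by
  classical
  rintro ⟨σ, hsep, hsp⟩
  have hex : ∃ m, 1 ≤ m ∧ m < n ∧ SplitsAt σ m := hsp
  let j := Nat.find hex
  obtain ⟨hQ1, hQ2, hQ3⟩ : 1 ≤ j ∧ j < n ∧ SplitsAt σ j := Nat.find_spec hex
  obtain ⟨sepL, sepR⟩ := sep_components hsep j hQ1 hQ2 hQ3
  have hnot : ¬ HasSplit (leftPerm σ j hQ2.le hQ3) := by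
    rintro ⟨m, hm1, hm2, hms⟩
    have hsm : SplitsAt σ m := by
      intro i hi
      have h := hms ⟨(i:ℕ), by omega⟩ hi
      rw [lpv σ j hQ2.le hQ3 (i:ℕ) (by omega)] at h
      have e1 := val_congr σ (show ((⟨(i:ℕ), by omega⟩ : Fin n) : ℕ) = (i:ℕ) from rfl)
      omega
    exact Nat.find_min hex hm2 ⟨hm1, by omega, hsm⟩
  refine ⟨⟨⟨j, Finset.mem_Icc.mpr ⟨hQ1, by omega⟩⟩,
    ⟨leftPerm σ j hQ2.le hQ3, sepL, hnot⟩, ⟨rightPerm σ j hQ2.le hQ3, sepR⟩⟩, ?_⟩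
  exact Subtype.ext (eq_directSum_components σ j hQ2.le hQ3).symm

instance (n : ℕ) : Finite (Tri n) := by
  unfold Tri Indec; infer_instance

lemma card_decomp_sum {n : ℕ} (hn : 2 ≤ n) :
    Nat.card (Decomp n) = ∑ j ∈ Finset.Icc 1 (n-1), numIndec j * numSep (n - j) := by
  have e : Tri n ≃ Decomp n := Equiv.ofBijective _ ⟨FF_injective, FF_surjective hn⟩
  rw [← Nat.card_congr e]
  rw [show (Tri n) = (Σ j : (Finset.Icc 1 (n-1)),
    (Indec (j : ℕ) × {β : Equiv.Perm (Fin (n - (j : ℕ))) // Separable β})) from rfl]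
  rw [nat_card_sigma]
  rw [← Finset.sum_coe_sort (Finset.Icc 1 (n-1)) (fun j => numIndec j * numSep (n - j))]
  exact Finset.sum_congr rfl fun j _ => by rw [Nat.card_prod]; rfl

lemma numSep_two_mul {n : ℕ} (hn : 2 ≤ n) : numSep n = 2 * Nat.card (Decomp n) := by
  rw [numSep_eq_decomp_add_indec, card_decomp_eq_indec hn]; ring

lemma numSep_eq_two_mul_indec {j : ℕ} (hj : 2 ≤ j) : numSep j = 2 * numIndec j := by
  rw [numSep_eq_decomp_add_indec, card_decomp_eq_indec hj, numIndec]; ring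

/-- The recurrence `s_n = s_1 s_{n-1} + (1/2)∑_{j=2}^{n-1} s_j s_{n-j} + (1/2)s_n` for
`n ≥ 2`, with `s_1 = 1`. -/
theorem numSep_recurrence_half :
    numSep 1 = 1 ∧
    ∀ n : ℕ, 2 ≤ n →
      (numSep n : ℚ) = (numSep 1 : ℚ) * numSep (n - 1) +
        (1 / 2) * ∑ j ∈ Finset.Icc 2 (n - 1), (numSep j : ℚ) * numSep (n - j) +
        (1 / 2) * numSep n := by
  refine ⟨numSep_one, fun n hn => ?_⟩
  have hIns : Finset.Icc 1 (n-1) = insert 1 (Finset.Icc 2 (n-1)) := by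
    ext x; simp only [Finset.mem_Icc, Finset.mem_insert]; omega
  have hP2 : Nat.card (Decomp n) = numSep (n-1)
      + ∑ j ∈ Finset.Icc 2 (n-1), numIndec j * numSep (n - j) := by
    rw [card_decomp_sum hn, hIns, Finset.sum_insert (by simp [Finset.mem_Icc]),
      numIndec_one, one_mul]
  have hnat : numSep n = 2 * (numSep (n-1)
      + ∑ j ∈ Finset.Icc 2 (n-1), numIndec j * numSep (n - j)) := by
    rw [numSep_two_mul hn, hP2]
  have hcast := congrArg (fun x : ℕ => (x : ℚ)) hnat
  push_cast at hcast
  have hsum : ∑ j ∈ Finset.Icc 2 (n-1), (numSep j : ℚ) * numSep (n - j)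
      = 2 * ∑ j ∈ Finset.Icc 2 (n-1), (numIndec j : ℚ) * numSep (n - j) := by
    rw [Finset.mul_sum]
    refine Finset.sum_congr rfl fun j hj => ?_
    have hj2 : 2 ≤ j := (Finset.mem_Icc.mp hj).1
    rw [numSep_eq_two_mul_indec hj2]
    push_cast
    ring
  rw [numSep_one, hsum, hcast]
  push_cast
  ring
end

section
/- Equivalently, the sequence s_n of counts of separable permutations satisfies s_n = 2 s_{n−1} + ∑_{j=2}^{n−1} s_j s_{n−j} for n ≥ 2, with s_1 = 1 (i.e., s_{n+1} equals the n-th large Schröder number D_n). -/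
open Equiv Finset Filter Topology

namespace SepAux

variable {k l m n : ℕ}

lemma directSum_apply_lt (σ : Perm (Fin k)) (τ : Perm (Fin l)) (i : Fin (k + l))
    (h : (i : ℕ) < k) : ((directSum σ τ) i : ℕ) = σ ⟨i, h⟩ := by
  have e : finSumFinEquiv.symm i = Sum.inl (⟨i, h⟩ : Fin k) := by
    rw [Equiv.symm_apply_eq]; ext; simp
  simp [directSum, e]

lemma directSum_apply_ge (σ : Perm (Fin k)) (τ : Perm (Fin l)) (i : Fin (k + l))
    (h : k ≤ (i : ℕ)) : ((directSum σ τ) i : ℕ) = k + τ ⟨i - k, by omega⟩ := by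
  have e : finSumFinEquiv.symm i = Sum.inr (⟨i - k, by omega⟩ : Fin l) := by
    rw [Equiv.symm_apply_eq]; ext; simp; omega
  simp [directSum, e]

lemma skewSum_apply_lt (σ : Perm (Fin k)) (τ : Perm (Fin l)) (i : Fin (k + l))
    (h : (i : ℕ) < k) : ((skewSum σ τ) i : ℕ) = l + σ ⟨i, h⟩ := by
  have e : finSumFinEquiv.symm i = Sum.inl (⟨i, h⟩ : Fin k) := by
    rw [Equiv.symm_apply_eq]; ext; simp
  simp [skewSum, e]; omega

lemma skewSum_apply_ge (σ : Perm (Fin k)) (τ : Perm (Fin l)) (i : Fin (k + l))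
    (h : k ≤ (i : ℕ)) : ((skewSum σ τ) i : ℕ) = τ ⟨i - k, by omega⟩ := by
  have e : finSumFinEquiv.symm i = Sum.inr (⟨i - k, by omega⟩ : Fin l) := by
    rw [Equiv.symm_apply_eq]; ext; simp; omega
  simp [skewSum, e]

lemma size_pos {π : Perm (Fin n)} (h : Separable π) : 0 < n := by
  induction h with
  | single => omega
  | dsum _ _ h1 _ => omega
  | ssum _ _ h1 _ => omega

end SepAux

namespace SepAux

variable {k l m n : ℕ}

/-- `π` maps `[0,k)` into `[0,k)`. -/
def AddS (π : Perm (Fin n)) (k : ℕ) : Prop := ∀ i : Fin n, (i : ℕ) < k → (π i : ℕ) < k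

/-- `π` maps `[0,k)` into `[n-k,n)`. -/
def SubS (π : Perm (Fin n)) (k : ℕ) : Prop := ∀ i : Fin n, (i : ℕ) < k → n - k ≤ (π i : ℕ)

instance (π : Perm (Fin n)) (k : ℕ) : Decidable (AddS π k) := by unfold AddS; infer_instance
instance (π : Perm (Fin n)) (k : ℕ) : Decidable (SubS π k) := by unfold SubS; infer_instance

lemma addS_ge {π : Perm (Fin n)} {k : ℕ} (h : AddS π k) :
    ∀ i : Fin n, k ≤ (i : ℕ) → k ≤ (π i : ℕ) := by
  classical
  intro i hi
  by_contra hc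
  push_neg at hc
  set S : Finset (Fin n) := Finset.univ.filter (fun j => (j : ℕ) < k) with hS
  have hsub : S.image π ⊆ S := by
    intro x hx
    simp only [hS, Finset.mem_image, Finset.mem_filter, Finset.mem_univ, true_and] at hx ⊢
    obtain ⟨j, hj, rfl⟩ := hx
    exact h j hj
  have hcard : (S.image π).card = S.card := Finset.card_image_of_injective _ π.injective
  have heq : S.image π = S := Finset.eq_of_subset_of_card_le hsub (le_of_eq hcard.symm)
  have : π i ∈ S := by
    simp only [hS, Finset.mem_filter, Finset.mem_univ, true_and]; exact hc
  rw [← heq] at this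
  simp only [Finset.mem_image, hS, Finset.mem_filter, Finset.mem_univ, true_and] at this
  obtain ⟨j, hj, hji⟩ := this
  have := π.injective hji
  omega

lemma card_filter_lt (hk : k ≤ n) :
    (Finset.univ.filter (fun j : Fin n => (j : ℕ) < k)).card = k := by
  classical
  apply Finset.card_eq_of_bijective (fun i h => (⟨i, by omega⟩ : Fin n))
  · intro a ha
    simp only [Finset.mem_filter, Finset.mem_univ, true_and] at ha
    exact ⟨a, ha, by ext; rfl⟩
  · intro i h
    simp only [Finset.mem_filter, Finset.mem_univ, true_and]
    exact h
  · intro i j hi hj hij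
    simpa [Fin.ext_iff] using hij

lemma card_filter_ge (hk : k ≤ n) :
    (Finset.univ.filter (fun j : Fin n => n - k ≤ (j : ℕ))).card = k := by
  classical
  apply Finset.card_eq_of_bijective (fun i h => (⟨n - k + i, by omega⟩ : Fin n))
  · intro a ha
    simp only [Finset.mem_filter, Finset.mem_univ, true_and] at ha
    exact ⟨(a : ℕ) - (n - k), by omega, by ext; simp; omega⟩
  · intro i h
    simp only [Finset.mem_filter, Finset.mem_univ, true_and]
    omega
  · intro i j hi hj hij
    simp only [Fin.ext_iff] at hij
    omega

lemma subS_lt {π : Perm (Fin n)} {k : ℕ} (h : SubS π k) (hk : k ≤ n) :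
    ∀ i : Fin n, k ≤ (i : ℕ) → (π i : ℕ) < n - k := by
  classical
  intro i hi
  by_contra hc
  push_neg at hc
  set S : Finset (Fin n) := Finset.univ.filter (fun j => (j : ℕ) < k) with hS
  set T : Finset (Fin n) := Finset.univ.filter (fun j => n - k ≤ (j : ℕ)) with hT
  have hsub : S.image π ⊆ T := by
    intro x hx
    simp only [hS, hT, Finset.mem_image, Finset.mem_filter, Finset.mem_univ, true_and] at hx ⊢
    obtain ⟨j, hj, rfl⟩ := hx
    exact h j hj
  have hcard : (S.image π).card = S.card := Finset.card_image_of_injective _ π.injective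
  have heq : S.image π = T := by
    apply Finset.eq_of_subset_of_card_le hsub
    rw [hcard, hS, hT, card_filter_lt hk, card_filter_ge hk]
  have : π i ∈ T := by
    simp only [hT, Finset.mem_filter, Finset.mem_univ, true_and]; exact hc
  rw [← heq] at this
  simp only [Finset.mem_image, hS, Finset.mem_filter, Finset.mem_univ, true_and] at this
  obtain ⟨j, hj, hji⟩ := this
  have := π.injective hji
  omega

lemma not_addS_subS {π : Perm (Fin n)} {a b : ℕ} (ha : 0 < a) (han : a < n)
    (hb : 0 < b) (hbn : b < n) (hA : AddS π a) (hB : SubS π b) : False := by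
  have h0a : (π ⟨0, by omega⟩ : ℕ) < a := hA _ ha
  have h0b : n - b ≤ (π ⟨0, by omega⟩ : ℕ) := hB _ hb
  have h1a : a ≤ (π ⟨max a b, by omega⟩ : ℕ) := addS_ge hA _ (by simp)
  have h1b : (π ⟨max a b, by omega⟩ : ℕ) < n - b := subS_lt hB (by omega) _ (by simp)
  omega

/-- Transport a permutation along an equality of sizes. -/
def castPerm (e : m = n) (π : Perm (Fin m)) : Perm (Fin n) :=
  (finCongr e).permCongr π

lemma castPerm_apply (e : m = n) (π : Perm (Fin m)) (i : Fin n) :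
    ((castPerm e π) i : ℕ) = π ⟨i, by omega⟩ := by
  subst e; rfl

@[simp] lemma castPerm_rfl (π : Perm (Fin n)) : castPerm rfl π = π := by
  ext i; simp [castPerm]

lemma castPerm_castPerm (e : m = n) (e' : n = k) (π : Perm (Fin m)) :
    castPerm e' (castPerm e π) = castPerm (e.trans e') π := by
  subst e; subst e'; simp

lemma sep_castPerm (e : m = n) {π : Perm (Fin m)} (h : Separable π) :
    Separable (castPerm e π) := by
  subst e; simpa using h

/-- The restriction of `π` to `[0,k)` as a permutation of `Fin k`. -/
def extL (π : Perm (Fin n)) (hk : k ≤ n) (h : AddS π k) : Perm (Fin k) where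
  toFun i := ⟨π ⟨i, by omega⟩, h _ i.2⟩
  invFun i := ⟨π⁻¹ ⟨i, by omega⟩, by
    by_contra hc
    push_neg at hc
    have := addS_ge h (π⁻¹ ⟨i, by omega⟩) hc
    simp at this
    omega⟩
  left_inv i := by ext; simp
  right_inv i := by ext; simp

/-- The restriction of `π` to `[k,n)` as a permutation of `Fin (n-k)`. -/
def extR (π : Perm (Fin n)) (hk : k ≤ n) (h : AddS π k) : Perm (Fin (n - k)) where
  toFun i := ⟨(π ⟨k + i, by omega⟩ : ℕ) - k, by
    have h1 := addS_ge h ⟨k + i, by omega⟩ (by simp)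
    have h2 := (π ⟨k + i, by omega⟩).2
    omega⟩
  invFun i := ⟨(π⁻¹ ⟨k + i, by omega⟩ : ℕ) - k, by
    have h1 : k ≤ (π⁻¹ ⟨k + i, by omega⟩ : ℕ) := by
      by_contra hc
      push_neg at hc
      have := h _ hc
      simp only [Equiv.Perm.inv_def, Equiv.apply_symm_apply] at this
      omega
    have h2 := (π⁻¹ ⟨k + i, by omega⟩ : Fin n).2
    omega⟩
  left_inv i := by
    have h1 := addS_ge h ⟨k + i, by omega⟩ (by simp)
    ext
    simp only
    have : (⟨k + ((π ⟨k + i, by omega⟩ : ℕ) - k), by omega⟩ : Fin n) = π ⟨k + i, by omega⟩ := by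
      ext; simp; omega
    rw [this]
    simp
  right_inv i := by
    have h1 : k ≤ (π⁻¹ ⟨k + i, by omega⟩ : ℕ) := by
      by_contra hc
      push_neg at hc
      have := h _ hc
      simp only [Equiv.Perm.inv_def, Equiv.apply_symm_apply] at this
      omega
    ext
    simp only
    have : (⟨k + ((π⁻¹ ⟨k + i, by omega⟩ : ℕ) - k), by omega⟩ : Fin n) = π⁻¹ ⟨k + i, by omega⟩ := by
      ext; simp only [Fin.val_mk]; omega
    rw [this]
    simp

lemma extL_apply (π : Perm (Fin n)) (hk : k ≤ n) (h : AddS π k) (i : Fin k) :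
    ((extL π hk h) i : ℕ) = π ⟨i, by omega⟩ := rfl

lemma extR_apply (π : Perm (Fin n)) (hk : k ≤ n) (h : AddS π k) (i : Fin (n - k)) :
    ((extR π hk h) i : ℕ) = (π ⟨k + i, by omega⟩ : ℕ) - k := rfl

lemma reconstruct (π : Perm (Fin n)) (hk : k ≤ n) (h : AddS π k) :
    castPerm (by omega) (directSum (extL π hk h) (extR π hk h)) = π := by
  ext i
  rcases Nat.lt_or_ge (i : ℕ) k with hik | hik
  · rw [castPerm_apply, directSum_apply_lt _ _ _ hik, extL_apply]
  · rw [castPerm_apply, directSum_apply_ge _ _ _ hik, extR_apply]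
    have h1 := addS_ge h ⟨k + ((i : ℕ) - k), by omega⟩ (by simp)
    have : (⟨k + ((i : ℕ) - k), by omega⟩ : Fin n) = i := by ext; simp; omega
    rw [this] at h1 ⊢
    omega

section Values

variable {e : k + l = n} {σ : Perm (Fin k)} {τ : Perm (Fin l)} {π : Perm (Fin n)}

lemma castD_lt (hπ : π = castPerm e (directSum σ τ)) (i : Fin n) (hi : (i : ℕ) < k) :
    (π i : ℕ) = σ ⟨i, hi⟩ := by
  rw [hπ, castPerm_apply, directSum_apply_lt _ _ _ hi]

lemma castD_ge (hπ : π = castPerm e (directSum σ τ)) (i : Fin n) (hi : k ≤ (i : ℕ)) :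
    (π i : ℕ) = k + τ ⟨(i : ℕ) - k, by omega⟩ := by
  rw [hπ, castPerm_apply, directSum_apply_ge _ _ _ hi]

lemma castS_lt (hπ : π = castPerm e (skewSum σ τ)) (i : Fin n) (hi : (i : ℕ) < k) :
    (π i : ℕ) = l + σ ⟨i, hi⟩ := by
  rw [hπ, castPerm_apply, skewSum_apply_lt _ _ _ hi]

lemma castS_ge (hπ : π = castPerm e (skewSum σ τ)) (i : Fin n) (hi : k ≤ (i : ℕ)) :
    (π i : ℕ) = τ ⟨(i : ℕ) - k, by omega⟩ := by
  rw [hπ, castPerm_apply, skewSum_apply_ge _ _ _ hi]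

lemma addS_of_castD (hπ : π = castPerm e (directSum σ τ)) : AddS π k := by
  intro i hi
  rw [castD_lt hπ i hi]
  exact (σ _).2

lemma subS_of_castS (hπ : π = castPerm e (skewSum σ τ)) : SubS π k := by
  intro i hi
  rw [castS_lt hπ i hi]
  have : n - k = l := by omega
  omega

lemma addS_iff_of_castD (hπ : π = castPerm e (directSum σ τ)) {j : ℕ} (hj : j ≤ k) :
    AddS π j ↔ AddS σ j := by
  constructor
  · intro h i hi
    have := h ⟨i, by omega⟩ hi
    rwa [castD_lt hπ _ (by simpa using lt_of_lt_of_le hi hj)] at this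
  · intro h i hi
    rw [castD_lt hπ i (lt_of_lt_of_le hi hj)]
    exact h _ hi

lemma extL_of_castD (hπ : π = castPerm e (directSum σ τ)) :
    extL π (by omega) (addS_of_castD hπ) = σ := by
  ext i
  rw [extL_apply]
  exact castD_lt hπ _ i.2

lemma extR_of_castD (hπ : π = castPerm e (directSum σ τ)) :
    extR π (by omega) (addS_of_castD hπ) = castPerm (by omega) τ := by
  ext i
  rw [extR_apply, castPerm_apply]
  rw [castD_ge hπ _ (by simp)]
  simp

end Values

/-- Complement: `comp π i = n - 1 - π i`. -/
def comp (π : Perm (Fin n)) : Perm (Fin n) := π.trans (Fin.revPerm)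

lemma comp_apply (π : Perm (Fin n)) (i : Fin n) : ((comp π) i : ℕ) = n - 1 - π i := by
  simp [comp, Fin.rev]
  omega

@[simp] lemma comp_comp (π : Perm (Fin n)) : comp (comp π) = π := by
  ext i
  rw [comp_apply, comp_apply]
  have := (π i).2
  omega

lemma comp_directSum (σ : Perm (Fin k)) (τ : Perm (Fin l)) :
    comp (directSum σ τ) = skewSum (comp σ) (comp τ) := by
  ext i
  rcases Nat.lt_or_ge (i : ℕ) k with hi | hi
  · rw [comp_apply, directSum_apply_lt _ _ _ hi, skewSum_apply_lt _ _ _ hi, comp_apply]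
    have := (σ ⟨i, hi⟩).2
    omega
  · rw [comp_apply, directSum_apply_ge _ _ _ hi, skewSum_apply_ge _ _ _ hi, comp_apply]
    have := (τ ⟨(i : ℕ) - k, by omega⟩).2
    omega

lemma comp_skewSum (σ : Perm (Fin k)) (τ : Perm (Fin l)) :
    comp (skewSum σ τ) = directSum (comp σ) (comp τ) := by
  have := comp_directSum (comp σ) (comp τ)
  simp only [comp_comp] at this
  rw [← this, comp_comp]

lemma comp_castPerm (e : m = n) (π : Perm (Fin m)) :
    comp (castPerm e π) = castPerm e (comp π) := by
  subst e; simp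

lemma sep_comp {π : Perm (Fin n)} (h : Separable π) : Separable (comp π) := by
  induction h with
  | single =>
    have : comp (Equiv.refl (Fin 1)) = Equiv.refl (Fin 1) := by
      ext i
      rw [comp_apply]
      omega
    rw [this]
    exact Separable.single
  | dsum _ _ h1 h2 =>
    rw [comp_directSum]
    exact Separable.ssum h1 h2
  | ssum _ _ h1 h2 =>
    rw [comp_skewSum]
    exact Separable.dsum h1 h2


lemma pvc {k : ℕ} (σ : Perm (Fin k)) (a b : ℕ) (ha : a < k) (hb : b < k) (h : a = b) :
    (σ ⟨a, ha⟩ : ℕ) = σ ⟨b, hb⟩ := by subst h; rfl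

set_option maxHeartbeats 1000000 in
lemma sep_of_castD : ∀ (n : ℕ) {k l : ℕ} (σ : Perm (Fin k)) (τ : Perm (Fin l)) (e : k + l = n)
    (π : Perm (Fin n)), Separable π → 0 < k → 0 < l →
    π = castPerm e (directSum σ τ) → Separable σ ∧ Separable τ := by
  intro n
  induction n using Nat.strong_induction_on with
  | _ n IH =>
  intro k l σ τ e π hsep hk hl hπ
  cases hsep with
  | single => omega
  | @ssum k' l' σ' τ' hσ' hτ' =>
    exfalso
    have hk' := size_pos hσ'
    have hl' := size_pos hτ'
    exact not_addS_subS hk (by omega) hk' (by omega)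
      (addS_of_castD hπ) (subS_of_castS (castPerm_rfl _).symm)
  | @dsum k' l' σ' τ' hσ' hτ' =>
    have hk' := size_pos hσ'
    have hl' := size_pos hτ'
    have hv1 : ∀ i : Fin (k' + l'), (hi : (i : ℕ) < k) →
        ((directSum σ' τ') i : ℕ) = σ ⟨i, hi⟩ := castD_lt hπ
    have hv2 : ∀ i : Fin (k' + l'), (hi : k ≤ (i : ℕ)) →
        ((directSum σ' τ') i : ℕ) = k + τ ⟨(i : ℕ) - k, by omega⟩ := castD_ge hπ
    have hv1' : ∀ i : Fin (k' + l'), (hi : (i : ℕ) < k') →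
        ((directSum σ' τ') i : ℕ) = σ' ⟨i, hi⟩ := castD_lt (castPerm_rfl _).symm
    have hv2' : ∀ i : Fin (k' + l'), (hi : k' ≤ (i : ℕ)) →
        ((directSum σ' τ') i : ℕ) = k' + τ' ⟨(i : ℕ) - k', by omega⟩ :=
      castD_ge (castPerm_rfl _).symm
    rcases lt_trichotomy k k' with hkk | hkk | hkk
    · -- k < k' : split σ' at k
      have hA : AddS (directSum σ' τ') k := addS_of_castD hπ
      have hAσ' : AddS σ' k :=
        (addS_iff_of_castD (e := rfl) (castPerm_rfl _).symm (le_of_lt hkk)).mp hA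
      have hrec := reconstruct σ' (le_of_lt hkk) hAσ'
      obtain ⟨hsL, hsR⟩ := IH k' (by omega) (extL σ' (le_of_lt hkk) hAσ')
        (extR σ' (le_of_lt hkk) hAσ') (by omega) σ' hσ' hk (by omega) hrec.symm
      have hσeq : σ = extL σ' (le_of_lt hkk) hAσ' := by
        ext i
        rw [extL_apply]
        have h1 := hv1 ⟨i, by omega⟩ i.2
        have h2 := hv1' ⟨i, by omega⟩ (by simp; omega)
        simp [Fin.eta] at h1 h2
        omega
      have hτeq : τ = castPerm (by omega)
          (directSum (extR σ' (le_of_lt hkk) hAσ') τ') := by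
        ext j
        rw [castPerm_apply]
        have hτj := hv2 ⟨k + j, by omega⟩ (by simp)
        have hidx : (⟨k + (j : ℕ) - k, by omega⟩ : Fin l) = j := by ext; simp
        rw [hidx] at hτj
        rcases Nat.lt_or_ge (j : ℕ) (k' - k) with hj | hj
        · rw [directSum_apply_lt _ _ _ hj, extR_apply]
          have h2 := hv1' ⟨k + j, by omega⟩ (by simp; omega)
          simp [Fin.eta] at hτj h2 ⊢
          omega
        · rw [directSum_apply_ge _ _ _ hj]
          have h2 := hv2' ⟨k + j, by omega⟩ (by simp; omega)
          have h4 := pvc τ' (k + (j : ℕ) - k') ((j : ℕ) - (k' - k)) (by omega) (by omega)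
            (by omega)
          simp [Fin.eta] at hτj h2 h4 ⊢
          omega
      constructor
      · rw [hσeq]; exact hsL
      · rw [hτeq]; exact sep_castPerm _ (Separable.dsum hsR hτ')
    · -- k = k'
      subst hkk
      have hll : l = l' := by omega
      subst hll
      have hσeq : σ = σ' := by
        ext i
        have h1 := hv1 ⟨i, by omega⟩ i.2
        have h2 := hv1' ⟨i, by omega⟩ i.2
        simp [Fin.eta] at h1 h2
        omega
      have hτeq : τ = τ' := by
        ext j
        have h1 := hv2 ⟨k + j, by omega⟩ (by simp)
        have h2 := hv2' ⟨k + j, by omega⟩ (by simp)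
        have hidx : (⟨k + (j : ℕ) - k, by omega⟩ : Fin l) = j := by ext; simp
        rw [hidx] at h1 h2
        omega
      rw [hσeq, hτeq]
      exact ⟨hσ', hτ'⟩
    · -- k' < k : split τ' at k - k'
      have hA : AddS (directSum σ' τ') k := addS_of_castD hπ
      have hkn : k < k' + l' := by omega
      have hAτ' : AddS τ' (k - k') := by
        intro j hj
        have h2 := hv2' ⟨k' + j, by omega⟩ (by simp)
        have hidx : (⟨k' + (j : ℕ) - k', by omega⟩ : Fin l') = j := by ext; simp
        rw [hidx] at h2
        have h3 := hA ⟨k' + j, by omega⟩ (by simp; omega)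
        omega
      have hkl' : k - k' ≤ l' := by omega
      have hrec := reconstruct τ' hkl' hAτ'
      obtain ⟨hsL, hsR⟩ := IH l' (by omega) (extL τ' hkl' hAτ')
        (extR τ' hkl' hAτ') (by omega) τ' hτ' (by omega) (by omega) hrec.symm
      have hge : ∀ j : Fin (l' - (k - k')), k - k' ≤ (τ' ⟨k - k' + j, by omega⟩ : ℕ) :=
        fun j => addS_ge hAτ' _ (by simp)
      have hσeq : σ = castPerm (by omega) (directSum σ' (extL τ' hkl' hAτ')) := by
        ext i
        rw [castPerm_apply]
        have h1 := hv1 ⟨i, by omega⟩ i.2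
        simp [Fin.eta] at h1
        rcases Nat.lt_or_ge (i : ℕ) k' with hi | hi
        · rw [directSum_apply_lt _ _ _ hi]
          have h2 := hv1' ⟨i, by omega⟩ (by simp; omega)
          simp [Fin.eta] at h2 ⊢
          omega
        · rw [directSum_apply_ge _ _ _ hi, extL_apply]
          have h2 := hv2' ⟨i, by omega⟩ (by simp; omega)
          simp [Fin.eta] at h2 ⊢
          omega
      have hτeq : τ = castPerm (by omega) (extR τ' hkl' hAτ') := by
        ext j
        rw [castPerm_apply, extR_apply]
        have h1 := hv2 ⟨k + j, by omega⟩ (by simp)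
        have hidx : (⟨k + (j : ℕ) - k, by omega⟩ : Fin l) = j := by ext; simp
        rw [hidx] at h1
        have h2 := hv2' ⟨k + j, by omega⟩ (by simp; omega)
        have h4 := pvc τ' (k + (j : ℕ) - k') (k - k' + (j : ℕ)) (by omega) (by omega) (by omega)
        have h3 := addS_ge hAτ' ⟨k - k' + (j : ℕ), by omega⟩ (by simp)
        simp [Fin.eta] at h1 h2 h3 h4 ⊢
        omega
      constructor
      · rw [hσeq]; exact sep_castPerm _ (Separable.dsum hσ' hsL)
      · rw [hτeq]; exact sep_castPerm _ hsR

lemma sep_of_castS (n : ℕ) {k l : ℕ} (σ : Perm (Fin k)) (τ : Perm (Fin l)) (e : k + l = n)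
    (π : Perm (Fin n)) (hsep : Separable π) (hk : 0 < k) (hl : 0 < l)
    (hπ : π = castPerm e (skewSum σ τ)) : Separable σ ∧ Separable τ := by
  have h1 : comp π = castPerm e (directSum (comp σ) (comp τ)) := by
    rw [hπ, comp_castPerm, comp_skewSum]
  obtain ⟨h2, h3⟩ := sep_of_castD n (comp σ) (comp τ) e (comp π) (sep_comp hsep) hk hl h1
  constructor
  · have := sep_comp h2; rwa [comp_comp] at this
  · have := sep_comp h3; rwa [comp_comp] at this


/-- Plus-decomposable. -/
def PDec (π : Perm (Fin n)) : Prop := ∃ j, 0 < j ∧ j < n ∧ AddS π j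

/-- Minus-decomposable. -/
def MDec (π : Perm (Fin n)) : Prop := ∃ j, 0 < j ∧ j < n ∧ SubS π j

instance (π : Perm (Fin n)) : Decidable (PDec π) :=
  decidable_of_iff (∃ j, j < n ∧ 0 < j ∧ AddS π j) (by unfold PDec; tauto)

lemma pdec_or_mdec {π : Perm (Fin n)} (h : Separable π) (hn : 2 ≤ n) : PDec π ∨ MDec π := by
  cases h with
  | single => omega
  | @dsum k l σ τ h1 h2 =>
    have hk := size_pos h1
    have hl := size_pos h2
    exact Or.inl ⟨k, hk, by omega, addS_of_castD (castPerm_rfl _).symm⟩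
  | @ssum k l σ τ h1 h2 =>
    have hk := size_pos h1
    have hl := size_pos h2
    exact Or.inr ⟨k, hk, by omega, subS_of_castS (castPerm_rfl _).symm⟩

lemma not_pdec_mdec {π : Perm (Fin n)} (h1 : PDec π) (h2 : MDec π) : False := by
  obtain ⟨a, ha, han, hA⟩ := h1
  obtain ⟨b, hb, hbn, hB⟩ := h2
  exact not_addS_subS ha han hb hbn hA hB

lemma addS_comp {π : Perm (Fin n)} {j : ℕ} (hj : 0 < j) (h : SubS π j) : AddS (comp π) j := by
  intro i hi
  have h1 := h i hi
  have h2 := (π i).2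
  rw [comp_apply]
  omega

lemma subS_comp {π : Perm (Fin n)} {j : ℕ} (hjn : j ≤ n) (h : AddS π j) : SubS (comp π) j := by
  intro i hi
  have h1 := h i hi
  rw [comp_apply]
  omega

lemma pdec_comp {π : Perm (Fin n)} (h : MDec π) : PDec (comp π) := by
  obtain ⟨j, hj, hjn, hB⟩ := h
  exact ⟨j, hj, hjn, addS_comp hj hB⟩

lemma mdec_comp {π : Perm (Fin n)} (h : PDec π) : MDec (comp π) := by
  obtain ⟨j, hj, hjn, hA⟩ := h
  exact ⟨j, hj, hjn, subS_comp (by omega) hA⟩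

/-- number of plus-decomposable separable permutations -/
noncomputable def pd (n : ℕ) : ℕ := Nat.card {π : Perm (Fin n) // Separable π ∧ PDec π}

/-- number of plus-indecomposable separable permutations -/
noncomputable def aFun (n : ℕ) : ℕ := Nat.card {π : Perm (Fin n) // Separable π ∧ ¬ PDec π}

lemma numSep_eq_pd_add_aFun (n : ℕ) : numSep n = pd n + aFun n := by
  classical
  rw [numSep, pd, aFun, ← Nat.card_sum]
  apply Nat.card_congr
  exact ((Equiv.subtypeEquivRight (fun π => by tauto)).trans
    (subtypeOrEquiv _ _ (by rw [disjoint_iff_inf_le]; intro π hπ; exact (hπ.2.2 hπ.1.2).elim)))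

lemma pd_eq_md (n : ℕ) : pd n = Nat.card {π : Perm (Fin n) // Separable π ∧ MDec π} := by
  apply Nat.card_congr
  refine ⟨fun π => ⟨comp π.1, sep_comp π.2.1, mdec_comp π.2.2⟩,
    fun π => ⟨comp π.1, sep_comp π.2.1, pdec_comp π.2.2⟩, ?_, ?_⟩
  · rintro ⟨π, h⟩; simp
  · rintro ⟨π, h⟩; simp

lemma numSep_one : numSep 1 = 1 := by
  have huniq : ∀ σ : Perm (Fin 1), σ = Equiv.refl (Fin 1) := by
    intro σ
    ext i
    have h1 := (σ i).2
    have h2 := i.2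
    simp
  rw [numSep]
  haveI : Unique {σ : Perm (Fin 1) // Separable σ} :=
    { default := ⟨Equiv.refl _, Separable.single⟩
      uniq := fun σ => Subtype.ext (huniq σ.1) }
  exact Nat.card_unique

lemma numSep_eq_two_pd {n : ℕ} (hn : 2 ≤ n) : numSep n = 2 * pd n := by
  classical
  have h1 : numSep n = pd n + Nat.card {π : Perm (Fin n) // Separable π ∧ MDec π} := by
    rw [numSep, pd, ← Nat.card_sum]
    apply Nat.card_congr
    refine (Equiv.subtypeEquivRight (fun π => ?_)).trans
      (subtypeOrEquiv _ _ (by rw [disjoint_iff_inf_le]; intro π hπ; exact (not_pdec_mdec hπ.1.2 hπ.2.2).elim))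
    constructor
    · intro h
      rcases pdec_or_mdec h hn with h' | h'
      · exact Or.inl ⟨h, h'⟩
      · exact Or.inr ⟨h, h'⟩
    · rintro (⟨h, _⟩ | ⟨h, _⟩) <;> exact h
  rw [h1, ← pd_eq_md]
  omega


@[simp] lemma castPerm_self (h : n = n) (π : Perm (Fin n)) : castPerm h π = π := by
  ext i
  rw [castPerm_apply]

lemma card_sigma_helper {ι : Type*} [Fintype ι] (f : ι → Type*) [∀ i, Finite (f i)] :
    Nat.card (Σ i, f i) = ∑ i, Nat.card (f i) := by
  classical
  letI : ∀ i, Fintype (f i) := fun i => Fintype.ofFinite _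
  rw [Nat.card_eq_fintype_card, Fintype.card_sigma]
  exact Finset.sum_congr rfl fun i _ => (Nat.card_eq_fintype_card).symm

/-- The index type for the decomposition of plus-decomposable separable permutations. -/
def Tn (n : ℕ) : Type := Σ j : (Finset.Icc 1 (n - 1) : Finset ℕ),
  ({σ : Perm (Fin (j : ℕ)) // Separable σ ∧ ¬ PDec σ} ×
   {τ : Perm (Fin (n - (j : ℕ))) // Separable τ})

lemma mem_bound {n j : ℕ} (h : j ∈ Finset.Icc 1 (n - 1)) : 1 ≤ j ∧ j + 1 ≤ n := by
  rw [Finset.mem_Icc] at h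
  omega

def toPD {n : ℕ} (x : Tn n) : {π : Perm (Fin n) // Separable π ∧ PDec π} :=
  ⟨castPerm (by have := mem_bound x.1.2; omega) (directSum x.2.1.1 x.2.2.1),
   sep_castPerm _ (Separable.dsum x.2.1.2.1 x.2.2.2),
   ⟨(x.1 : ℕ), by have := mem_bound x.1.2; omega, by have := mem_bound x.1.2; omega,
    addS_of_castD rfl⟩⟩

lemma toPD_bijective {n : ℕ} : Function.Bijective (toPD (n := n)) := by
  classical
  constructor
  · rintro ⟨⟨j, hjm⟩, ⟨σ, hσ⟩, ⟨τ, hτ⟩⟩ ⟨⟨j', hjm'⟩, ⟨σ', hσ'⟩, ⟨τ', hτ'⟩⟩ h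
    have hb := mem_bound hjm
    have hb' := mem_bound hjm'
    have heq := congrArg Subtype.val h
    simp only [toPD] at heq
    have hπ' : castPerm (by omega : j + (n - j) = n) (directSum σ τ) =
        castPerm (by omega : j' + (n - j') = n) (directSum σ' τ') := heq
    have hjj : j = j' := by
      rcases lt_trichotomy j j' with hlt | he | hlt
      · exfalso
        have hA : AddS (castPerm (by omega : j + (n - j) = n) (directSum σ τ)) j :=
          addS_of_castD rfl
        have : AddS σ' j := (addS_iff_of_castD hπ' (le_of_lt hlt)).mp hA
        exact hσ'.2 ⟨j, by omega, hlt, this⟩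
      · exact he
      · exfalso
        have hA : AddS (castPerm (by omega : j' + (n - j') = n) (directSum σ' τ')) j' :=
          addS_of_castD rfl
        have : AddS σ j' := (addS_iff_of_castD hπ'.symm (le_of_lt hlt)).mp hA
        exact hσ.2 ⟨j', by omega, hlt, this⟩
    subst hjj
    have e1 := extL_of_castD (e := (show j + (n - j) = n by omega))
      (π := castPerm (show j + (n - j) = n by omega) (directSum σ τ)) rfl
    have e2 := extL_of_castD (e := (show j + (n - j) = n by omega)) hπ'
    have hσσ : σ = σ' := e1.symm.trans e2
    have f1 := extR_of_castD (e := (show j + (n - j) = n by omega))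
      (π := castPerm (show j + (n - j) = n by omega) (directSum σ τ)) rfl
    have f2 := extR_of_castD (e := (show j + (n - j) = n by omega)) hπ'
    have hττ : τ = τ' := by
      have := f1.symm.trans f2
      rwa [castPerm_self, castPerm_self] at this
    subst hσσ
    subst hττ
    rfl
  · rintro ⟨π, hsep, hpd⟩
    have hex : ∃ j, 0 < j ∧ j < n ∧ AddS π j := hpd
    set j₀ := Nat.find hex with hj₀
    obtain ⟨h0, hn', hA⟩ := Nat.find_spec hex
    have hrec := reconstruct π (le_of_lt hn') hA
    obtain ⟨hsl, hsr⟩ := sep_of_castD n _ _ (by omega) π hsep h0 (by omega) hrec.symm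
    have hindec : ¬ PDec (extL π (le_of_lt hn') hA) := by
      rintro ⟨j, hj0, hjk, hAj⟩
      have hAπ : AddS π j := (addS_iff_of_castD hrec.symm (le_of_lt hjk)).mpr hAj
      exact Nat.find_min hex hjk ⟨hj0, by omega, hAπ⟩
    have hmem : j₀ ∈ Finset.Icc 1 (n - 1) := by
      rw [Finset.mem_Icc]
      omega
    refine ⟨⟨⟨j₀, hmem⟩, ⟨extL π (le_of_lt hn') hA, hsl, hindec⟩,
      ⟨extR π (le_of_lt hn') hA, hsr⟩⟩, ?_⟩
    exact Subtype.ext hrec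

lemma pd_eq_sum (n : ℕ) :
    pd n = ∑ j ∈ Finset.Icc 1 (n - 1), aFun j * numSep (n - j) := by
  classical
  have h1 : pd n = Nat.card (Tn n) :=
    (Nat.card_eq_of_bijective _ toPD_bijective).symm
  rw [h1]
  have h2 : Nat.card (Tn n) = ∑ j : (Finset.Icc 1 (n - 1) : Finset ℕ),
      aFun (j : ℕ) * numSep (n - (j : ℕ)) := by
    rw [Tn, card_sigma_helper]
    refine Finset.sum_congr rfl fun j _ => ?_
    rw [Nat.card_prod]
    rfl
  rw [h2, ← Finset.sum_coe_sort (Finset.Icc 1 (n - 1)) (fun j => aFun j * numSep (n - j))]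


lemma two_aFun {k : ℕ} (hk : 2 ≤ k) : 2 * aFun k = numSep k := by
  have h1 := numSep_eq_pd_add_aFun k
  have h2 := numSep_eq_two_pd hk
  omega

lemma aFun_one : aFun 1 = 1 := by
  have h1 := numSep_eq_pd_add_aFun 1
  have h2 : pd 1 = 0 := by
    rw [pd]
    haveI : IsEmpty {π : Perm (Fin 1) // Separable π ∧ PDec π} := by
      refine ⟨fun x => ?_⟩
      obtain ⟨π, _, j, hj, hjn, _⟩ := x
      omega
    exact Nat.card_of_isEmpty
  rw [numSep_one] at h1
  omega

lemma recurrence {n : ℕ} (hn : 2 ≤ n) :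
    numSep n = 2 * numSep (n - 1) + ∑ j ∈ Finset.Icc 2 (n - 1), numSep j * numSep (n - j) := by
  have h1 := numSep_eq_two_pd hn
  rw [pd_eq_sum] at h1
  have hins : Finset.Icc 1 (n - 1) = insert 1 (Finset.Icc 2 (n - 1)) := by
    ext x
    simp only [Finset.mem_Icc, Finset.mem_insert]
    omega
  rw [hins, Finset.sum_insert (by simp [Finset.mem_Icc])] at h1
  rw [aFun_one, one_mul] at h1
  rw [h1, Nat.mul_add]
  congr 1
  rw [Finset.mul_sum]
  refine Finset.sum_congr rfl fun j hj => ?_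
  rw [Finset.mem_Icc] at hj
  rw [← mul_assoc, two_aFun (by omega)]

lemma schroeder (D : ℕ → ℕ) (h0 : D 0 = 1)
    (hrec : ∀ n : ℕ, 1 ≤ n → D n = D (n - 1) + ∑ k ∈ Finset.range n, D k * D (n - 1 - k)) :
    ∀ n : ℕ, numSep (n + 1) = D n := by
  intro n
  induction n using Nat.strong_induction_on with
  | _ n IH =>
  match n with
  | 0 => rw [numSep_one, h0]
  | (m + 1) =>
    have hm : ∀ j, j ≤ m → numSep (j + 1) = D j := fun j hj => IH j (by omega)
    have hL : numSep (m + 1 + 1) =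
        2 * numSep (m + 1) + ∑ j ∈ Finset.Icc 2 (m + 1), numSep j * numSep (m + 2 - j) := by
      have := recurrence (n := m + 2) (by omega)
      simpa using this
    have hsum : ∑ j ∈ Finset.Icc 2 (m + 1), numSep j * numSep (m + 2 - j) =
        ∑ k ∈ Finset.Icc 1 m, D k * D (m - k) := by
      refine Finset.sum_nbij' (fun j => j - 1) (fun k => k + 1) ?_ ?_ ?_ ?_ ?_
      · intro a ha; simp only [Finset.mem_Icc] at ha ⊢; omega
      · intro a ha; simp only [Finset.mem_Icc] at ha ⊢; omega
      · intro a ha; simp only [Finset.mem_Icc] at ha; show a - 1 + 1 = a; omega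
      · intro a ha; simp only [Finset.mem_Icc] at ha; show a + 1 - 1 = a; omega
      · intro j hj
        simp only [Finset.mem_Icc] at hj
        show numSep j * numSep (m + 2 - j) = D (j - 1) * D (m - (j - 1))
        have e1 : numSep j = D (j - 1) := by
          have := hm (j - 1) (by omega)
          rw [show j - 1 + 1 = j by omega] at this
          exact this
        have e2 : numSep (m + 2 - j) = D (m - (j - 1)) := by
          have := hm (m - (j - 1)) (by omega)
          rw [show m - (j - 1) + 1 = m + 2 - j by omega] at this
          exact this
        rw [e1, e2]
    have hR : D (m + 1) = 2 * D m + ∑ k ∈ Finset.Icc 1 m, D k * D (m - k) := by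
      rw [hrec (m + 1) (by omega), Nat.add_sub_cancel]
      rw [Finset.range_eq_Ico, Finset.sum_eq_sum_Ico_succ_bot (by omega), h0, one_mul]
      rw [Finset.Ico_add_one_right_eq_Icc, Nat.sub_zero]
      norm_num
      omega
    rw [hL, hsum, hm m le_rfl, hR]

end SepAux

/-- `s_n = 2 s_{n-1} + ∑_{j=2}^{n-1} s_j s_{n-j}` for `n ≥ 2`, with `s_1 = 1`; equivalently
`s_{n+1}` is the `n`-th large Schröder number `D_n`, where `D_0 = 1` and
`D_n = D_{n-1} + ∑_{k=0}^{n-1} D_k D_{n-1-k}` for `n ≥ 1`. -/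
theorem numSep_schroeder_recurrence :
    numSep 1 = 1 ∧
    (∀ n : ℕ, 2 ≤ n →
      numSep n = 2 * numSep (n - 1) + ∑ j ∈ Finset.Icc 2 (n - 1), numSep j * numSep (n - j)) ∧
    ∀ D : ℕ → ℕ, D 0 = 1 →
      (∀ n : ℕ, 1 ≤ n → D n = D (n - 1) + ∑ k ∈ Finset.range n, D k * D (n - 1 - k)) →
      ∀ n : ℕ, numSep (n + 1) = D n := by
  refine ⟨SepAux.numSep_one, fun n hn => SepAux.recurrence hn,
    fun D h0 hrec n => SepAux.schroeder D h0 hrec n⟩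
end
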